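/- arXiv:1707.00282 — 15 statements merged into one kernel-verified Lean document; each statement's English description precedes it below -/
import Mathlib

section
/- T = 0 if and only if T ∘ T = 0. -/
open scoped InnerProductSpace

/-- Let `H` be a complex inner product space (inner product
conjugate-linear in the first variable) and `T : H → H` a `ℂ`-linear map satisfying
`⟪T u, v⟫ = ⟪u, (−i)·T v⟫` for all `u, v`.  Then `T = 0` if and only if `T ∘ T = 0`. -/
theorem eq_zero_iff_comp_self_eq_zero
    {H : Type*} [NormedAddCommGroup H] [InnerProductSpace ℂ H]
    (T : H →ₗ[ℂ] H)
    (hT : ∀ u v : H, ⟪T u, v⟫_ℂ = ⟪u, (-Complex.I) • T v⟫_ℂ) :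
    T = 0 ↔ T ∘ₗ T = 0 := by
  constructor
  · rintro rfl; ext v; simp
  · intro h
    ext v
    have h0 : T (T v) = 0 := by
      have := LinearMap.congr_fun h v
      simpa using this
    have : ⟪T v, T v⟫_ℂ = 0 := by
      rw [hT v (T v), h0]
      simp
    simpa using inner_self_eq_zero.mp this
end

section
/- For T ∈ End(k), the bilinear form κ_T satisfies the 2-cocycle identity κ(T[x,y], z) = κ(T x, [y,z]) − κ(T y, [x,z]) for all x, y, z ∈ k if and only if T is a derivation of k. -/
/-- Let `k` be a Lie algebra over a field `𝔽` of characteristic zero and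
`κ` a nondegenerate invariant symmetric bilinear form on `k`.  For `T ∈ End(k)`, the
bilinear form `κ_T(x,y) = κ(T x, y)` satisfies the 2-cocycle identity
`κ(T[x,y], z) = κ(T x, [y,z]) − κ(T y, [x,z])` for all `x, y, z` if and only if `T` is a
derivation of `k`. -/
theorem kappaT_cocycle_iff_derivation
    {𝔽 : Type*} [Field 𝔽] [CharZero 𝔽]
    {k : Type*} [LieRing k] [LieAlgebra 𝔽 k]
    (κ : k →ₗ[𝔽] k →ₗ[𝔽] 𝔽)
    (hκsymm : ∀ x y : k, κ x y = κ y x)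
    (hκinv : ∀ x y z : k, κ ⁅x, y⁆ z = κ x ⁅y, z⁆)
    (hκnd : ∀ x : k, (∀ y : k, κ x y = 0) → x = 0)
    (T : k →ₗ[𝔽] k) :
    (∀ x y z : k, κ (T ⁅x, y⁆) z = κ (T x) ⁅y, z⁆ - κ (T y) ⁅x, z⁆) ↔
      (∀ x y : k, T ⁅x, y⁆ = ⁅T x, y⁆ + ⁅x, T y⁆) := by
  have key : ∀ x y z : k,
      κ (T x) ⁅y, z⁆ - κ (T y) ⁅x, z⁆ = κ (⁅T x, y⁆ + ⁅x, T y⁆) z := by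
    intro x y z
    have h1 : κ ⁅T x, y⁆ z = κ (T x) ⁅y, z⁆ := hκinv _ _ _
    have h2 : κ ⁅T y, x⁆ z = κ (T y) ⁅x, z⁆ := hκinv _ _ _
    have h3 : (⁅x, T y⁆ : k) = -⁅T y, x⁆ := (lie_skew _ _).symm
    rw [map_add, LinearMap.add_apply, h1, h3, map_neg, LinearMap.neg_apply, h2]
    ring
  constructor
  · intro h x y
    have : ∀ z, κ (T ⁅x, y⁆ - (⁅T x, y⁆ + ⁅x, T y⁆)) z = 0 := by
      intro z
      rw [map_sub, LinearMap.sub_apply, h x y z, key x y z, sub_self]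
    have := hκnd _ this
    exact sub_eq_zero.mp this
  · intro h x y z
    rw [h x y, ← key x y z]
end

section
/- Assume k is finite-dimensional. Then the map T ↦ κ_T restricts to a linear bijection from der₋(k) onto the space Z²(k) of 𝔽-valued 2-cocycles of k. -/
/-- Let `k` be a finite-dimensional Lie algebra over a field `𝔽` of
characteristic zero, with a nondegenerate invariant symmetric bilinear form `κ`.
Then the (linear) map `T ↦ κ_T = κ(T·, ·)` restricts to a bijection from
`der₋(k)` — the skew-adjoint derivations of `k` — onto the space `Z²(k)` of
`𝔽`-valued 2-cocycles of `k`. -/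
theorem kappaT_bijOn_derNeg_Z2
    {𝔽 : Type*} [Field 𝔽] [CharZero 𝔽]
    {k : Type*} [LieRing k] [LieAlgebra 𝔽 k] [FiniteDimensional 𝔽 k]
    (κ : k →ₗ[𝔽] k →ₗ[𝔽] 𝔽)
    (hκsymm : ∀ x y : k, κ x y = κ y x)
    (hκinv : ∀ x y z : k, κ ⁅x, y⁆ z = κ x ⁅y, z⁆)
    (hκnd : ∀ x : k, (∀ y : k, κ x y = 0) → x = 0) :
    Set.BijOn (fun T : k →ₗ[𝔽] k => κ ∘ₗ T)
      {D : k →ₗ[𝔽] k | (∀ x y : k, D ⁅x, y⁆ = ⁅D x, y⁆ + ⁅x, D y⁆) ∧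
        (∀ x y : k, κ (D x) y = - κ x (D y))}
      {ω : k →ₗ[𝔽] k →ₗ[𝔽] 𝔽 | (∀ x y : k, ω x y = - ω y x) ∧
        (∀ x y z : k, ω ⁅x, y⁆ z = ω x ⁅y, z⁆ - ω y ⁅x, z⁆)} := by
  have hinj : Function.Injective κ := by
    intro a b hab
    have h0 : ∀ y, κ (a - b) y = 0 := by intro y; simp [map_sub, hab]
    exact sub_eq_zero.mp (hκnd _ h0)
  -- κ(a, ⁅b, c⁆) = - κ(b, ⁅a, c⁆)
  have hflip : ∀ a b c : k, κ a ⁅b, c⁆ = - κ b ⁅a, c⁆ := by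
    intro a b c
    calc κ a ⁅b, c⁆ = κ ⁅a, b⁆ c := (hκinv _ _ _).symm
      _ = - κ ⁅b, a⁆ c := by rw [show (⁅b, a⁆ : k) = -⁅a, b⁆ from (lie_skew a b).symm ▸ (neg_neg _).symm]; simp only [map_neg, LinearMap.neg_apply, neg_neg]
      _ = - κ b ⁅a, c⁆ := by rw [hκinv]
  constructor
  · -- maps to
    intro D hD
    obtain ⟨hder, hskew⟩ := hD
    constructor
    · intro x y
      simp only [LinearMap.comp_apply]
      rw [hskew x y, hκsymm]
    · intro x y z
      simp only [LinearMap.comp_apply]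
      rw [hder x y]
      simp only [map_add, LinearMap.add_apply]
      rw [hκinv (D x) y z, hκinv x (D y) z]
      rw [show κ x ⁅D y, z⁆ = - κ (D y) ⁅x, z⁆ from hflip x (D y) z]
      ring
  constructor
  · -- injOn
    intro D₁ h1 D₂ h2 heq
    ext x
    have : κ (D₁ x) = κ (D₂ x) := congrArg (fun f => f x) heq
    exact hinj this
  · -- surjOn
    intro ω hω
    obtain ⟨hanti, hcoc⟩ := hω
    -- κ : k →ₗ Dual is injective hence bijective
    have hdim : Module.finrank 𝔽 k = Module.finrank 𝔽 (k →ₗ[𝔽] 𝔽) :=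
      (Subspace.dual_finrank_eq (K := 𝔽) (V := k)).symm
    let e : k ≃ₗ[𝔽] (k →ₗ[𝔽] 𝔽) := κ.linearEquivOfInjective hinj hdim
    have he : ∀ x, e x = κ x := fun x => κ.linearEquivOfInjective_apply hinj hdim x
    set T : k →ₗ[𝔽] k := (e.symm : (k →ₗ[𝔽] 𝔽) →ₗ[𝔽] k) ∘ₗ ω with hT
    have hκT : ∀ x, κ (T x) = ω x := by
      intro x
      have : T x = e.symm (ω x) := rfl
      rw [this, ← he, e.apply_symm_apply]
    refine ⟨T, ⟨?_, ?_⟩, ?_⟩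
    · -- derivation
      intro x y
      apply hinj
      ext z
      have h1 : κ (T ⁅x, y⁆) z = ω ⁅x, y⁆ z := by rw [hκT]
      rw [h1, hcoc x y z, map_add, LinearMap.add_apply,
        hκinv (T x) y z, hκinv x (T y) z,
        show κ x ⁅T y, z⁆ = - κ (T y) ⁅x, z⁆ from hflip x (T y) z,
        ← hκT x, ← hκT y]
      ring
    · -- skew
      intro x y
      rw [LinearMap.congr_fun (hκT x) y, hanti x y,
        ← LinearMap.congr_fun (hκT y) x, hκsymm]
    · -- image
      ext x y
      simp only [LinearMap.comp_apply]
      rw [hκT]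
end

section
/- Assume k is finite-dimensional. Then the map T ↦ κ_T restricts to a linear bijection from cent₊(k) onto the space of invariant symmetric bilinear forms on k. -/
/-- Let `k` be a finite-dimensional Lie algebra over a field `𝔽` of
characteristic zero, with a nondegenerate invariant symmetric bilinear form `κ`.
Then the (linear) map `T ↦ κ_T = κ(T·, ·)` restricts to a bijection from
`cent₊(k)` — the κ-symmetric elements of the centroid of `k` — onto the space of
invariant symmetric bilinear forms on `k`. -/
theorem kappaT_bijOn_centPlus_invSym
    {𝔽 : Type*} [Field 𝔽] [CharZero 𝔽]
    {k : Type*} [LieRing k] [LieAlgebra 𝔽 k] [FiniteDimensional 𝔽 k]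
    (κ : k →ₗ[𝔽] k →ₗ[𝔽] 𝔽)
    (hκsymm : ∀ x y : k, κ x y = κ y x)
    (hκinv : ∀ x y z : k, κ ⁅x, y⁆ z = κ x ⁅y, z⁆)
    (hκnd : ∀ x : k, (∀ y : k, κ x y = 0) → x = 0) :
    Set.BijOn (fun T : k →ₗ[𝔽] k => κ ∘ₗ T)
      {S : k →ₗ[𝔽] k | (∀ x y : k, S ⁅x, y⁆ = ⁅S x, y⁆) ∧
        (∀ x y : k, κ (S x) y = κ x (S y))}
      {β : k →ₗ[𝔽] k →ₗ[𝔽] 𝔽 | (∀ x y : k, β x y = β y x) ∧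
        (∀ x y z : k, β ⁅x, y⁆ z = β x ⁅y, z⁆)} := by
  have hnd : LinearMap.BilinForm.Nondegenerate κ :=
    ⟨fun x hx => hκnd x hx, fun y hy => hκnd y fun x => (hκsymm y x).trans (hy x)⟩
  refine ⟨?_, ?_, ?_⟩
  · rintro S ⟨hc, hs⟩
    refine ⟨fun x y => ?_, fun x y z => ?_⟩
    · simp only [LinearMap.comp_apply]
      rw [hs x y, hκsymm x (S y)]
    · simp only [LinearMap.comp_apply]
      rw [hc x y, hκinv (S x) y z]
  · rintro S₁ _ S₂ _ h
    ext x
    refine sub_eq_zero.mp (hκnd _ fun y => ?_)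
    have h' := DFunLike.congr_fun (DFunLike.congr_fun h x) y
    simp only [LinearMap.comp_apply] at h'
    simp [h']
  · rintro β ⟨hsym, hinv⟩
    set e := LinearMap.BilinForm.toDual κ hnd with he
    refine ⟨(e.symm : Module.Dual 𝔽 k →ₗ[𝔽] k) ∘ₗ β, ⟨fun x y => ?_, fun x y => ?_⟩, ?_⟩
    · refine sub_eq_zero.mp (hκnd _ fun z => ?_)
      have h1 : ∀ w v : k, κ (e.symm (β w)) v = β w v := fun w v =>
        LinearMap.BilinForm.apply_toDual_symm_apply (hB := hnd) (β w) v
      simp only [LinearMap.comp_apply, map_sub, LinearMap.sub_apply, LinearEquiv.coe_coe]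
      rw [h1 ⁅x, y⁆ z, hinv x y z, hκinv (e.symm (β x)) y z, h1 x ⁅y, z⁆]
      ring
    · have h1 : ∀ w v : k, κ (e.symm (β w)) v = β w v := fun w v =>
        LinearMap.BilinForm.apply_toDual_symm_apply (hB := hnd) (β w) v
      simp only [LinearMap.comp_apply, LinearEquiv.coe_coe]
      rw [h1 x y, hsym x y, hκsymm x (e.symm (β y)), h1 y x]
    · ext x y
      simp only [LinearMap.comp_apply]
      exact LinearMap.BilinForm.apply_toDual_symm_apply (hB := hnd) (β x) y
end

section
/- Assume k is finite-dimensional, let M be an 𝔽-vector space, D ∈ der₋(k) and m ∈ M. Then ν_{D;m}(x,y) := κ(D x, y)·m is a 2-cocycle of k with values in M, and if m ≠ 0, then ν_{D;m} is a 2-coboundary if and only if D is an inner derivation. -/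
/-- Let `k` be a finite-dimensional Lie algebra over a field `𝔽` of
characteristic zero with a nondegenerate invariant symmetric bilinear form `κ`,
`M` an `𝔽`-vector space, `D ∈ der₋(k)` (a κ-skew derivation) and `m ∈ M`.  Then
`ν_{D;m}(x,y) := κ(D x, y)·m` is a 2-cocycle of `k` with values in `M`, and if
`m ≠ 0`, then `ν_{D;m}` is a 2-coboundary if and only if `D` is an inner derivation. -/
theorem nu_D_m_cocycle_and_coboundary_iff_inner
    {𝔽 : Type*} [Field 𝔽] [CharZero 𝔽]
    {k : Type*} [LieRing k] [LieAlgebra 𝔽 k] [FiniteDimensional 𝔽 k]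
    {M : Type*} [AddCommGroup M] [Module 𝔽 M]
    (κ : k →ₗ[𝔽] k →ₗ[𝔽] 𝔽)
    (hκsymm : ∀ x y : k, κ x y = κ y x)
    (hκinv : ∀ x y z : k, κ ⁅x, y⁆ z = κ x ⁅y, z⁆)
    (hκnd : ∀ x : k, (∀ y : k, κ x y = 0) → x = 0)
    (D : k →ₗ[𝔽] k)
    (hDder : ∀ x y : k, D ⁅x, y⁆ = ⁅D x, y⁆ + ⁅x, D y⁆)
    (hDskew : ∀ x y : k, κ (D x) y = - κ x (D y))
    (m : M) :
    (∀ x y : k, κ (D x) y • m = -(κ (D y) x • m)) ∧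
    (∀ x y z : k, κ (D ⁅x, y⁆) z • m = κ (D x) ⁅y, z⁆ • m - κ (D y) ⁅x, z⁆ • m) ∧
    (m ≠ 0 →
      ((∃ ℓ : k →ₗ[𝔽] M, ∀ x y : k, κ (D x) y • m = ℓ ⁅x, y⁆) ↔
        (∃ t : k, ∀ x : k, D x = ⁅t, x⁆))) := by
  have key : ∀ x y z : k, κ (D ⁅x, y⁆) z = κ (D x) ⁅y, z⁆ - κ (D y) ⁅x, z⁆ := by
    intro x y z
    have h1 : κ ⁅x, D y⁆ z = - κ (D y) ⁅x, z⁆ := by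
      have h : (⁅x, D y⁆ : k) = -⁅D y, x⁆ := (lie_skew x (D y)).symm
      rw [h, map_neg, LinearMap.neg_apply, hκinv (D y) x z]
    rw [hDder x y]
    simp only [map_add, LinearMap.add_apply, hκinv (D x) y z, h1]
    ring
  refine ⟨?_, ?_, ?_⟩
  · intro x y
    rw [hDskew x y, hκsymm x (D y), neg_smul]
  · intro x y z
    rw [key x y z, sub_smul]
  · intro hm
    constructor
    · rintro ⟨ℓ, hℓ⟩
      obtain ⟨f, hf⟩ := (LinearMap.toSpanSingleton 𝔽 M m).exists_leftInverse_of_injective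
        (LinearMap.ker_toSpanSingleton (R := 𝔽) hm)
      have hfm : f m = 1 := by
        have := LinearMap.congr_fun hf 1
        simpa [LinearMap.toSpanSingleton_apply] using this
      have hg : ∀ x y : k, κ (D x) y = f (ℓ ⁅x, y⁆) := by
        intro x y
        have := congrArg f (hℓ x y)
        simpa [map_smul, hfm] using this
      have hinj : Function.Injective κ := by
        rw [← LinearMap.ker_eq_bot, LinearMap.ker_eq_bot']
        intro a ha
        exact hκnd a fun y => by rw [ha]; rfl
      have hsurj : Function.Surjective κ :=
        (LinearMap.injective_iff_surjective_of_finrank_eq_finrank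
          (Subspace.dual_finrank_eq (K := 𝔽) (V := k)).symm).mp hinj
      obtain ⟨t, ht⟩ := hsurj (f.comp ℓ)
      refine ⟨t, fun x => ?_⟩
      have : ∀ y : k, κ (D x - ⁅t, x⁆) y = 0 := by
        intro y
        have h1 : κ ⁅t, x⁆ y = f (ℓ ⁅x, y⁆) := by
          rw [hκinv t x y, ht]; rfl
        simp [map_sub, hg x y, h1]
      have := hκnd _ this
      rwa [sub_eq_zero] at this
    · rintro ⟨t, ht⟩
      refine ⟨(LinearMap.toSpanSingleton 𝔽 M m).comp (κ t), fun x y => ?_⟩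
      simp only [LinearMap.comp_apply, LinearMap.toSpanSingleton_apply]
      congr 1
      rw [ht x, ← hκinv t x y]
end

section
/- Assume k is finite-dimensional and let S₁,…,S_m ∈ cent₊(k) be such that κ_{S₁},…,κ_{S_m} form a basis of the space of invariant symmetric bilinear forms on k. Then for every bilinear map α : k × k → M with values in an 𝔽-vector space M that is symmetric (α(x,y) = α(y,x)) and invariant (α([x,y],z) = α(x,[y,z])), there exist m₁,…,m_m ∈ M such that α(x,y) = Σⱼ κ(Sⱼ x, y)·mⱼ for all x, y ∈ k. -/
/-- Let `k` be a finite-dimensional Lie algebra over a field `𝔽` of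
characteristic zero with a nondegenerate invariant symmetric bilinear form `κ`, and let
`S₁, …, S_m ∈ cent₊(k)` (κ-symmetric centroid elements) be such that the forms
`κ_{Sⱼ} = κ(Sⱼ·,·)` form a basis of the space of invariant symmetric bilinear forms
on `k`.  Then for every symmetric invariant bilinear map `α : k × k → M` with values in
an `𝔽`-vector space `M` there exist `m₁, …, m_m ∈ M` such that
`α(x,y) = Σⱼ κ(Sⱼ x, y)·mⱼ` for all `x, y ∈ k`. -/
theorem invariant_symmetric_eq_sum_kappaS_smul
    {𝔽 : Type*} [Field 𝔽] [CharZero 𝔽]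
    {k : Type*} [LieRing k] [LieAlgebra 𝔽 k] [FiniteDimensional 𝔽 k]
    {M : Type*} [AddCommGroup M] [Module 𝔽 M]
    (κ : k →ₗ[𝔽] k →ₗ[𝔽] 𝔽)
    (hκsymm : ∀ x y : k, κ x y = κ y x)
    (hκinv : ∀ x y z : k, κ ⁅x, y⁆ z = κ x ⁅y, z⁆)
    (hκnd : ∀ x : k, (∀ y : k, κ x y = 0) → x = 0)
    (m : ℕ) (S : Fin m → (k →ₗ[𝔽] k))
    (hScent : ∀ j, ∀ x y : k, S j ⁅x, y⁆ = ⁅S j x, y⁆)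
    (hSsym : ∀ j, ∀ x y : k, κ (S j x) y = κ x (S j y))
    (hindep : LinearIndependent 𝔽 (fun j => κ ∘ₗ S j))
    (hspan : ∀ β : k →ₗ[𝔽] k →ₗ[𝔽] 𝔽,
      (∀ x y : k, β x y = β y x) →
      (∀ x y z : k, β ⁅x, y⁆ z = β x ⁅y, z⁆) →
      β ∈ Submodule.span 𝔽 (Set.range fun j => κ ∘ₗ S j))
    (α : k →ₗ[𝔽] k →ₗ[𝔽] M)
    (hαsym : ∀ x y : k, α x y = α y x)
    (hαinv : ∀ x y z : k, α ⁅x, y⁆ z = α x ⁅y, z⁆) :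
    ∃ c : Fin m → M, ∀ x y : k, α x y = ∑ j, κ (S j x) y • c j := by
  classical
  -- a basis of k
  obtain ⟨n, b⟩ : ∃ n, Nonempty (Module.Basis (Fin n) 𝔽 k) :=
    ⟨Module.finrank 𝔽 k, ⟨Module.finBasis 𝔽 k⟩⟩
  obtain ⟨b⟩ := b
  -- the (finite-dimensional) submodule containing all values of α
  set M₀ : Submodule 𝔽 M :=
    Submodule.span 𝔽 (Set.range fun q : Fin n × Fin n => α (b q.1) (b q.2)) with hM₀
  have hmem : ∀ x y : k, α x y ∈ M₀ := by
    intro x y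
    have hx : α x y = ∑ i, ∑ j, (b.repr x i * b.repr y j) • α (b i) (b j) := by
      conv_lhs => rw [← b.sum_repr x, ← b.sum_repr y]
      simp only [map_sum, map_smul, LinearMap.sum_apply, LinearMap.smul_apply, Finset.smul_sum, smul_smul]
      rw [Finset.sum_comm]
      exact Finset.sum_congr rfl fun i _ => Finset.sum_congr rfl fun j _ => by congr 1; ring
    rw [hx]
    refine Submodule.sum_mem _ fun i _ => Submodule.sum_mem _ fun j _ => ?_
    exact Submodule.smul_mem _ _ (Submodule.subset_span ⟨(i, j), rfl⟩)
  haveI : FiniteDimensional 𝔽 M₀ := FiniteDimensional.span_of_finite 𝔽 (Set.finite_range _)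
  let v := Module.finBasis 𝔽 M₀
  -- corestriction of α to M₀
  let α' : k →ₗ[𝔽] k →ₗ[𝔽] M₀ :=
    { toFun := fun x => LinearMap.codRestrict M₀ (α x) (fun y => hmem x y)
      map_add' := fun x y => by ext z; simp
      map_smul' := fun c x => by ext z; simp }
  have hα' : ∀ x y : k, ((α' x y : M₀) : M) = α x y := fun x y => rfl
  -- coordinate bilinear forms
  set β : Fin (Module.finrank 𝔽 M₀) → (k →ₗ[𝔽] k →ₗ[𝔽] 𝔽) :=
    fun l => LinearMap.compr₂ α' (v.coord l) with hβ
  have hβapp : ∀ l x y, β l x y = v.repr (α' x y) l := fun l x y => rfl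
  have hsym' : ∀ x y : k, α' x y = α' y x := fun x y =>
    Subtype.ext (by rw [hα', hα', hαsym])
  have hinv' : ∀ x y z : k, α' ⁅x, y⁆ z = α' x ⁅y, z⁆ := fun x y z =>
    Subtype.ext (by rw [hα', hα', hαinv])
  have hβsym : ∀ l, ∀ x y : k, β l x y = β l y x := by
    intro l x y
    rw [hβapp, hβapp, hsym']
  have hβinv : ∀ l, ∀ x y z : k, β l ⁅x, y⁆ z = β l x ⁅y, z⁆ := by
    intro l x y z
    rw [hβapp, hβapp, hinv']
  -- express each β l in terms of the κ_{S j}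
  have hd : ∀ l, ∃ d : Fin m → 𝔽, ∑ j, d j • (κ ∘ₗ S j) = β l := by
    intro l
    have := hspan (β l) (hβsym l) (hβinv l)
    exact (Submodule.mem_span_range_iff_exists_fun 𝔽).mp this
  choose d hdspec using hd
  refine ⟨fun j => ∑ l, d l j • (v l : M), fun x y => ?_⟩
  have hrepr : (α x y : M) = ∑ l, v.repr (α' x y) l • (v l : M) := by
    conv_lhs => rw [← hα' x y, ← v.sum_repr (α' x y)]
    push_cast
    rfl
  have hcoord : ∀ l, v.repr (α' x y) l = ∑ j, κ (S j x) y * d l j := by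
    intro l
    have := hdspec l
    have h2 : (∑ j, d l j • (κ ∘ₗ S j)) x y = β l x y := by rw [this]
    rw [← hβapp]
    rw [← h2]
    simp [mul_comm]
  rw [hrepr]
  simp only [hcoord, Finset.sum_smul, Finset.smul_sum, smul_smul]
  rw [Finset.sum_comm]
end

section
/- Let A be a unital commutative associative 𝔽-algebra, M an 𝔽-vector space, f : A → M a linear map, and D a derivation of k with κ(D x, y) = −κ(x, D y) for all x, y ∈ k. Then the bilinear map η_{f,D} on the current algebra A ⊗ k determined by η_{f,D}(a⊗x, b⊗y) = f(ab)·κ(D x, y) is a 2-cocycle of A ⊗ k with values in M, and it is k-cocyclic. -/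
open scoped TensorProduct

/-- Let `k` be a Lie algebra over a field `𝔽` of characteristic zero
with a nondegenerate invariant symmetric bilinear form `κ`, `A` a unital commutative
associative `𝔽`-algebra, `M` an `𝔽`-vector space, `f : A → M` a linear map, and `D` a
derivation of `k` with `κ(D x, y) = −κ(x, D y)`.  Then the bilinear map `η_{f,D}` on the
current algebra `A ⊗ k` determined by `η_{f,D}(a⊗x, b⊗y) = f(ab)·κ(D x, y)` is a
2-cocycle of `A ⊗ k` with values in `M`, and it is `k`-cocyclic. -/
theorem eta_fD_is_k_cocyclic_two_cocycle
    {𝔽 : Type*} [Field 𝔽] [CharZero 𝔽]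
    {k : Type*} [LieRing k] [LieAlgebra 𝔽 k]
    {A : Type*} [CommRing A] [Algebra 𝔽 A]
    {M : Type*} [AddCommGroup M] [Module 𝔽 M]
    (κ : k →ₗ[𝔽] k →ₗ[𝔽] 𝔽)
    (hκsymm : ∀ x y : k, κ x y = κ y x)
    (hκinv : ∀ x y z : k, κ ⁅x, y⁆ z = κ x ⁅y, z⁆)
    (hκnd : ∀ x : k, (∀ y : k, κ x y = 0) → x = 0)
    (f : A →ₗ[𝔽] M)
    (D : k →ₗ[𝔽] k)
    (hDder : ∀ x y : k, D ⁅x, y⁆ = ⁅D x, y⁆ + ⁅x, D y⁆)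
    (hDskew : ∀ x y : k, κ (D x) y = - κ x (D y)) :
    ∃ η : (A ⊗[𝔽] k) →ₗ[𝔽] (A ⊗[𝔽] k) →ₗ[𝔽] M,
      (∀ (a b : A) (x y : k), η (a ⊗ₜ x) (b ⊗ₜ y) = κ (D x) y • f (a * b)) ∧
      (∀ X Y : A ⊗[𝔽] k, η X Y = - η Y X) ∧
      (∀ X Y Z : A ⊗[𝔽] k, η ⁅X, Y⁆ Z = η X ⁅Y, Z⁆ - η Y ⁅X, Z⁆) ∧
      (∀ (a b : A),
        (∀ x y : k, η (a ⊗ₜ x) (b ⊗ₜ y) = - η (a ⊗ₜ y) (b ⊗ₜ x)) ∧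
        (∀ x y z : k, η (a ⊗ₜ ⁅x, y⁆) (b ⊗ₜ z)
          = η (a ⊗ₜ x) (b ⊗ₜ ⁅y, z⁆) - η (a ⊗ₜ y) (b ⊗ₜ ⁅x, z⁆))) := by
  classical
  -- inner bilinear map for fixed (a, x)
  let g : A → k → (A ⊗[𝔽] k →ₗ[𝔽] M) := fun a x =>
    TensorProduct.lift (LinearMap.mk₂ 𝔽 (fun b y => κ (D x) y • f (a * b))
      (by intro b b' y; simp [mul_add, smul_add])
      (by intro c b y
          show κ (D x) y • f (a * (c • b)) = c • (κ (D x) y • f (a * b))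
          rw [mul_smul_comm, map_smul, smul_comm])
      (by intro b y y'; simp [add_smul])
      (by intro c b y; simp [smul_smul]))
  have hg : ∀ a x b y, g a x (b ⊗ₜ y) = κ (D x) y • f (a * b) := by
    intro a x b y; simp [g]
  let η : (A ⊗[𝔽] k) →ₗ[𝔽] (A ⊗[𝔽] k) →ₗ[𝔽] M :=
    TensorProduct.lift (LinearMap.mk₂ 𝔽 g
      (by
        intro a a' x
        apply TensorProduct.ext'
        intro b y
        simp [hg, add_mul, smul_add])
      (by
        intro c a x
        apply TensorProduct.ext'
        intro b y
        simp only [LinearMap.mk₂_apply, TensorProduct.lift.tmul, hg, LinearMap.smul_apply]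
        rw [smul_mul_assoc, map_smul, smul_comm])
      (by
        intro a x x'
        apply TensorProduct.ext'
        intro b y
        simp [hg, add_smul])
      (by
        intro c a x
        apply TensorProduct.ext'
        intro b y
        simp [hg, smul_smul]))
  have hη : ∀ (a b : A) (x y : k), η (a ⊗ₜ x) (b ⊗ₜ y) = κ (D x) y • f (a * b) := by
    intro a b x y; simp [η, hg]
  -- skew symmetry on pure tensors
  have hskew : ∀ (a b : A) (x y : k),
      η (a ⊗ₜ x) (b ⊗ₜ y) = - η (b ⊗ₜ y) (a ⊗ₜ x) := by
    intro a b x y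
    rw [hη, hη, mul_comm b a]
    have : κ (D x) y = - κ (D y) x := by
      rw [hDskew x y, hκsymm]
    rw [this, neg_smul]
  have hκD : ∀ x y z : k, κ (D ⁅x, y⁆) z = κ (D x) ⁅y, z⁆ - κ (D y) ⁅x, z⁆ := by
    intro x y z
    rw [hDder x y]
    have h2 : κ x ⁅D y, z⁆ = - κ (D y) ⁅x, z⁆ := by
      rw [← hκinv, ← lie_skew, map_neg, LinearMap.neg_apply, hκinv]
    simp only [map_add, LinearMap.add_apply, hκinv, h2]
    ring
  -- cocycle identity on pure tensors
  have hcoc : ∀ (a b c : A) (x y z : k),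
      η ((a * b) ⊗ₜ ⁅x, y⁆) (c ⊗ₜ z)
        = η (a ⊗ₜ x) ((b * c) ⊗ₜ ⁅y, z⁆) - η (b ⊗ₜ y) ((a * c) ⊗ₜ ⁅x, z⁆) := by
    intro a b c x y z
    rw [hη, hη, hη, hκD, sub_smul]
    have : a * (b * c) = a * b * c := by ring
    rw [this]
    have : b * (a * c) = a * b * c := by ring
    rw [this]
  refine ⟨η, hη, ?_, ?_, ?_⟩
  · -- skew symmetry for all X, Y
    intro X Y
    induction X using TensorProduct.induction_on with
    | zero => simp
    | tmul a x =>
      induction Y using TensorProduct.induction_on with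
      | zero => simp
      | tmul b y => exact hskew a b x y
      | add Y₁ Y₂ h1 h2 => simp [map_add, h1, h2]; abel
    | add X₁ X₂ h1 h2 => simp [map_add, h1, h2]; abel
  · -- 2-cocycle identity for all X, Y, Z
    intro X Y Z
    induction X using TensorProduct.induction_on with
    | zero => simp
    | tmul a x =>
      induction Y using TensorProduct.induction_on with
      | zero => simp
      | tmul b y =>
        induction Z using TensorProduct.induction_on with
        | zero => simp
        | tmul c z =>
          have := hcoc a b c x y z
          simpa [LieAlgebra.ExtendScalars.bracket_tmul] using this
        | add Z₁ Z₂ h1 h2 => simp only [lie_add, map_add, h1, h2]; abel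
      | add Y₁ Y₂ h1 h2 =>
        simp only [lie_add, add_lie, map_add, LinearMap.add_apply, h1, h2]; abel
    | add X₁ X₂ h1 h2 =>
      simp only [lie_add, add_lie, map_add, LinearMap.add_apply, h1, h2]; abel
  · -- k-cocyclicity
    intro a b
    constructor
    · intro x y
      rw [hη, hη]
      have : κ (D x) y = - κ (D y) x := by rw [hDskew x y, hκsymm]
      rw [this, neg_smul]
    · intro x y z
      rw [hη, hη, hη, hκD, sub_smul]
end

section
/- Let A be a unital commutative associative 𝔽-algebra, M an 𝔽-vector space, F : A × A → M a Hochschild map, and S an element of the centroid of k with κ(S x, y) = κ(x, S y) for all x, y ∈ k. Then the bilinear map ξ_{F,S} on the current algebra A ⊗ k determined by ξ_{F,S}(a⊗x, b⊗y) = F(a,b)·κ(S x, y) is a 2-cocycle of A ⊗ k with values in M, and it is k-invariant. -/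
open scoped TensorProduct

section Aux

variable {𝔽 : Type*} [Field 𝔽]
    {k : Type*} [LieRing k] [LieAlgebra 𝔽 k]
    {A : Type*} [CommRing A] [Algebra 𝔽 A]
    {M : Type*} [AddCommGroup M] [Module 𝔽 M]

/-- The inner bilinear map `(b, y) ↦ κ (S x) y • F a b` for fixed `a, x`. -/
noncomputable def xiInner (κ : k →ₗ[𝔽] k →ₗ[𝔽] 𝔽) (F : A →ₗ[𝔽] A →ₗ[𝔽] M)
    (S : k →ₗ[𝔽] k) (a : A) (x : k) : A →ₗ[𝔽] k →ₗ[𝔽] M :=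
  LinearMap.mk₂ 𝔽 (fun b y => κ (S x) y • F a b)
    (fun b b' y => by simp only [map_add, smul_add])
    (fun c b y => by simp only [map_smul]; rw [smul_comm])
    (fun b y y' => by simp only [map_add, LinearMap.add_apply, add_smul])
    (fun c b y => by simp only [map_smul, LinearMap.smul_apply, smul_assoc])

@[simp] lemma xiInner_apply (κ : k →ₗ[𝔽] k →ₗ[𝔽] 𝔽) (F : A →ₗ[𝔽] A →ₗ[𝔽] M)
    (S : k →ₗ[𝔽] k) (a b : A) (x y : k) :
    xiInner κ F S a x b y = κ (S x) y • F a b := rfl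

/-- The bilinear form `ξ_{F,S}` on the current algebra. -/
noncomputable def xiAux (κ : k →ₗ[𝔽] k →ₗ[𝔽] 𝔽) (F : A →ₗ[𝔽] A →ₗ[𝔽] M)
    (S : k →ₗ[𝔽] k) : (A ⊗[𝔽] k) →ₗ[𝔽] (A ⊗[𝔽] k) →ₗ[𝔽] M :=
  TensorProduct.lift <|
    LinearMap.mk₂ 𝔽 (fun a x => TensorProduct.lift (xiInner κ F S a x))
      (fun a a' x => by
        apply TensorProduct.ext'; intro b y
        simp only [TensorProduct.lift.tmul, xiInner_apply, LinearMap.add_apply,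
          map_add, smul_add])
      (fun c a x => by
        apply TensorProduct.ext'; intro b y
        simp only [TensorProduct.lift.tmul, xiInner_apply, LinearMap.smul_apply,
          map_smul]
        rw [smul_comm])
      (fun a x x' => by
        apply TensorProduct.ext'; intro b y
        simp only [TensorProduct.lift.tmul, xiInner_apply, LinearMap.add_apply,
          map_add, add_smul])
      (fun c a x => by
        apply TensorProduct.ext'; intro b y
        simp only [TensorProduct.lift.tmul, xiInner_apply, LinearMap.smul_apply,
          map_smul, smul_assoc])

@[simp] lemma xiAux_tmul (κ : k →ₗ[𝔽] k →ₗ[𝔽] 𝔽) (F : A →ₗ[𝔽] A →ₗ[𝔽] M)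
    (S : k →ₗ[𝔽] k) (a b : A) (x y : k) :
    xiAux κ F S (a ⊗ₜ x) (b ⊗ₜ y) = κ (S x) y • F a b := rfl

end Aux

/-- Let `k` be a Lie algebra over a field `𝔽` of characteristic zero
with a nondegenerate invariant symmetric bilinear form `κ`, `A` a unital commutative
associative `𝔽`-algebra, `M` an `𝔽`-vector space, `F : A × A → M` a Hochschild map, and
`S` an element of the centroid of `k` with `κ(S x, y) = κ(x, S y)`.  Then the bilinear
map `ξ_{F,S}` on the current algebra `A ⊗ k` determined by
`ξ_{F,S}(a⊗x, b⊗y) = F(a,b)·κ(S x, y)` is a 2-cocycle of `A ⊗ k` with values in `M`,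
and it is `k`-invariant. -/
theorem xi_FS_is_k_invariant_two_cocycle
    {𝔽 : Type*} [Field 𝔽] [CharZero 𝔽]
    {k : Type*} [LieRing k] [LieAlgebra 𝔽 k]
    {A : Type*} [CommRing A] [Algebra 𝔽 A]
    {M : Type*} [AddCommGroup M] [Module 𝔽 M]
    (κ : k →ₗ[𝔽] k →ₗ[𝔽] 𝔽)
    (hκsymm : ∀ x y : k, κ x y = κ y x)
    (hκinv : ∀ x y z : k, κ ⁅x, y⁆ z = κ x ⁅y, z⁆)
    (hκnd : ∀ x : k, (∀ y : k, κ x y = 0) → x = 0)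
    (F : A →ₗ[𝔽] A →ₗ[𝔽] M)
    (hFskew : ∀ a b : A, F a b = - F b a)
    (hFhoch : ∀ a b c : A, F (a * b) c = F a (b * c) + F b (a * c))
    (S : k →ₗ[𝔽] k)
    (hScent : ∀ x y : k, S ⁅x, y⁆ = ⁅S x, y⁆)
    (hSsym : ∀ x y : k, κ (S x) y = κ x (S y)) :
    ∃ ξ : (A ⊗[𝔽] k) →ₗ[𝔽] (A ⊗[𝔽] k) →ₗ[𝔽] M,
      (∀ (a b : A) (x y : k), ξ (a ⊗ₜ x) (b ⊗ₜ y) = κ (S x) y • F a b) ∧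
      (∀ X Y : A ⊗[𝔽] k, ξ X Y = - ξ Y X) ∧
      (∀ X Y Z : A ⊗[𝔽] k, ξ ⁅X, Y⁆ Z = ξ X ⁅Y, Z⁆ - ξ Y ⁅X, Z⁆) ∧
      (∀ (a b : A) (x y z : k),
        ξ (a ⊗ₜ ⁅x, y⁆) (b ⊗ₜ z) = ξ (a ⊗ₜ x) (b ⊗ₜ ⁅y, z⁆)) := by
  set ξ := xiAux κ F S with hξ
  refine ⟨ξ, fun a b x y => rfl, ?_, ?_, ?_⟩
  · -- skew symmetry
    intro X Y
    induction X using TensorProduct.induction_on with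
    | zero => simp
    | tmul a x =>
      induction Y using TensorProduct.induction_on with
      | zero => simp
      | tmul b y =>
        rw [hξ, xiAux_tmul, xiAux_tmul, hFskew a b, hκsymm (S x) y, hSsym y x,
          hκsymm y (S x), smul_neg]
      | add Y₁ Y₂ h1 h2 =>
        rw [map_add, h1, h2, map_add, LinearMap.add_apply, neg_add]
    | add X₁ X₂ h1 h2 =>
      rw [map_add, LinearMap.add_apply, h1, h2, map_add, neg_add]
  · -- 2-cocycle identity
    have pure : ∀ (a b c : A) (x y z : k),
        ξ ⁅a ⊗ₜ[𝔽] x, b ⊗ₜ[𝔽] y⁆ (c ⊗ₜ z) =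
          ξ (a ⊗ₜ x) ⁅b ⊗ₜ[𝔽] y, c ⊗ₜ[𝔽] z⁆ - ξ (b ⊗ₜ y) ⁅a ⊗ₜ[𝔽] x, c ⊗ₜ[𝔽] z⁆ := by
      intro a b c x y z
      rw [LieAlgebra.ExtendScalars.bracket_tmul, LieAlgebra.ExtendScalars.bracket_tmul,
        LieAlgebra.ExtendScalars.bracket_tmul, hξ, xiAux_tmul, xiAux_tmul, xiAux_tmul]
      have h1 : κ (S ⁅x, y⁆) z = κ (S x) ⁅y, z⁆ := by rw [hScent, hκinv]
      have h2 : κ (S ⁅x, y⁆) z = - κ (S y) ⁅x, z⁆ := by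
        have hxy : (⁅x, y⁆ : k) = -⁅y, x⁆ := by simp
        rw [hxy, map_neg, map_neg, LinearMap.neg_apply, hScent, hκinv]
      rw [hFhoch a b c, smul_add, sub_eq_add_neg, ← neg_smul, ← h2, ← h1]
    intro X Y Z
    induction X using TensorProduct.induction_on with
    | zero => simp
    | tmul a x =>
      induction Y using TensorProduct.induction_on with
      | zero => simp
      | tmul b y =>
        induction Z using TensorProduct.induction_on with
        | zero => simp
        | tmul c z => exact pure a b c x y z
        | add Z₁ Z₂ h1 h2 =>
          rw [map_add, lie_add, lie_add, map_add, map_add, h1, h2]; abel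
      | add Y₁ Y₂ h1 h2 =>
        rw [lie_add, add_lie, map_add, LinearMap.add_apply, map_add, map_add,
          LinearMap.add_apply, h1, h2]
        abel
    | add X₁ X₂ h1 h2 =>
      rw [add_lie, add_lie, map_add, LinearMap.add_apply, map_add, map_add,
        LinearMap.add_apply, h1, h2]
      abel
  · -- k-invariance
    intro a b x y z
    rw [hξ, xiAux_tmul, xiAux_tmul, hScent, hκinv]
end

section
/- Assume k is perfect and let ω be a k-cocyclic 2-cocycle of the current algebra A ⊗ k with values in an 𝔽-vector space M. Then for all a, b ∈ A: ω_{a,b} = ω_{b,a} and ω_{ab,1} = ω_{a,b} = ω_{1,ab}. -/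
open scoped TensorProduct

/-- Let `k` be a perfect Lie algebra over a field `𝔽` of characteristic
zero, `A` a unital commutative associative `𝔽`-algebra and `ω` a `k`-cocyclic 2-cocycle
of the current algebra `A ⊗ k` with values in an `𝔽`-vector space `M` (here
`ω_{a,b}(x,y) := ω(a⊗x, b⊗y)`).  Then for all `a, b ∈ A`:
`ω_{a,b} = ω_{b,a}` and `ω_{ab,1} = ω_{a,b} = ω_{1,ab}`. -/
theorem k_cocyclic_symmetric_and_depends_on_product
    {𝔽 : Type*} [Field 𝔽] [CharZero 𝔽]
    {k : Type*} [LieRing k] [LieAlgebra 𝔽 k]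
    {A : Type*} [CommRing A] [Algebra 𝔽 A]
    {M : Type*} [AddCommGroup M] [Module 𝔽 M]
    (hperf : ∀ z : k, z ∈ Submodule.span 𝔽 {w : k | ∃ x y : k, ⁅x, y⁆ = w})
    (ω : (A ⊗[𝔽] k) →ₗ[𝔽] (A ⊗[𝔽] k) →ₗ[𝔽] M)
    (hωskew : ∀ X Y : A ⊗[𝔽] k, ω X Y = - ω Y X)
    (hωcoc : ∀ X Y Z : A ⊗[𝔽] k, ω ⁅X, Y⁆ Z = ω X ⁅Y, Z⁆ - ω Y ⁅X, Z⁆)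
    (hcocyclic : ∀ (a b : A),
      (∀ x y : k, ω (a ⊗ₜ x) (b ⊗ₜ y) = - ω (a ⊗ₜ y) (b ⊗ₜ x)) ∧
      (∀ x y z : k, ω (a ⊗ₜ ⁅x, y⁆) (b ⊗ₜ z)
        = ω (a ⊗ₜ x) (b ⊗ₜ ⁅y, z⁆) - ω (a ⊗ₜ y) (b ⊗ₜ ⁅x, z⁆))) :
    ∀ (a b : A) (x y : k),
      ω (a ⊗ₜ x) (b ⊗ₜ y) = ω (b ⊗ₜ x) (a ⊗ₜ y) ∧
      ω ((a * b) ⊗ₜ x) ((1 : A) ⊗ₜ y) = ω (a ⊗ₜ x) (b ⊗ₜ y) ∧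
      ω (a ⊗ₜ x) (b ⊗ₜ y) = ω ((1 : A) ⊗ₜ x) ((a * b) ⊗ₜ y) := by
  -- Symmetry in the algebra arguments.
  have hsym : ∀ (a b : A) (x y : k), ω (a ⊗ₜ x) (b ⊗ₜ y) = ω (b ⊗ₜ x) (a ⊗ₜ y) := by
    intro a b x y
    rw [hωskew, (hcocyclic b a).1 y x, neg_neg]
  -- Key identity: ω_{a,b}(v, w) = ω_{1,ab}(v, w) when w is a bracket.
  have hkey : ∀ (a b : A) (v u y : k),
      ω (a ⊗ₜ v) (b ⊗ₜ ⁅u, y⁆) = ω ((1 : A) ⊗ₜ v) ((a * b) ⊗ₜ ⁅u, y⁆) := by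
    intro a b v u y
    have h2 := hωcoc (a ⊗ₜ u) ((1 : A) ⊗ₜ v) (b ⊗ₜ y)
    simp only [LieAlgebra.ExtendScalars.bracket_tmul, mul_one, one_mul] at h2
    have hc2 := (hcocyclic a b).2 u v y
    have h3 : ω (a ⊗ₜ u) (b ⊗ₜ ⁅v, y⁆) - ω ((1 : A) ⊗ₜ v) ((a * b) ⊗ₜ ⁅u, y⁆)
        = ω (a ⊗ₜ u) (b ⊗ₜ ⁅v, y⁆) - ω (a ⊗ₜ v) (b ⊗ₜ ⁅u, y⁆) := h2 ▸ hc2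
    exact (sub_right_injective h3).symm
  -- Extend to all second arguments by perfectness.
  have hext : ∀ (a b : A) (v z : k),
      ω (a ⊗ₜ v) (b ⊗ₜ z) = ω ((1 : A) ⊗ₜ v) ((a * b) ⊗ₜ z) := by
    intro a b v z
    induction hperf z using Submodule.span_induction with
    | mem w hw => obtain ⟨u, y, rfl⟩ := hw; exact hkey a b v u y
    | zero => simp
    | add w₁ w₂ _ _ h1 h2 => simp [TensorProduct.tmul_add, h1, h2]
    | smul c w _ h => simp [TensorProduct.tmul_smul, h]
  intro a b x y
  refine ⟨hsym a b x y, ?_, hext a b x y⟩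
  calc ω ((a * b) ⊗ₜ x) ((1 : A) ⊗ₜ y)
      = ω ((1 : A) ⊗ₜ x) ((a * b * 1) ⊗ₜ y) := hext (a * b) 1 x y
    _ = ω ((1 : A) ⊗ₜ x) ((a * b) ⊗ₜ y) := by rw [mul_one]
    _ = ω (a ⊗ₜ x) (b ⊗ₜ y) := (hext a b x y).symm
end

section
/- Assume k is perfect and let ω be a k-invariant 2-cocycle of the current algebra A ⊗ k with values in an 𝔽-vector space M. Then for all a, b, c ∈ A: ω_{a,b} = −ω_{b,a} and ω_{ab,c} = ω_{a,bc} + ω_{b,ac}. -/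
open scoped TensorProduct

private lemma perf_vanish {𝔽 k M : Type*} [Field 𝔽] [LieRing k] [LieAlgebra 𝔽 k]
    [AddCommGroup M] [Module 𝔽 M]
    (hperf : ∀ z : k, z ∈ Submodule.span 𝔽 {w : k | ∃ x y : k, ⁅x, y⁆ = w})
    (L : k →ₗ[𝔽] M) (h : ∀ u v : k, L ⁅u, v⁆ = 0) : ∀ x, L x = 0 := by
  intro x
  have hle : Submodule.span 𝔽 {w : k | ∃ x y : k, ⁅x, y⁆ = w} ≤ LinearMap.ker L := by
    rw [Submodule.span_le]
    rintro w ⟨u, v, rfl⟩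
    exact h u v
  exact hle (hperf x)

/-- Let `k` be a perfect Lie algebra over a field `𝔽` of characteristic
zero, `A` a unital commutative associative `𝔽`-algebra and `ω` a `k`-invariant 2-cocycle
of the current algebra `A ⊗ k` with values in an `𝔽`-vector space `M` (here
`ω_{a,b}(x,y) := ω(a⊗x, b⊗y)`).  Then for all `a, b, c ∈ A`:
`ω_{a,b} = −ω_{b,a}` and `ω_{ab,c} = ω_{a,bc} + ω_{b,ac}`. -/
theorem k_invariant_skew_and_hochschild
    {𝔽 : Type*} [Field 𝔽] [CharZero 𝔽]
    {k : Type*} [LieRing k] [LieAlgebra 𝔽 k]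
    {A : Type*} [CommRing A] [Algebra 𝔽 A]
    {M : Type*} [AddCommGroup M] [Module 𝔽 M]
    (hperf : ∀ z : k, z ∈ Submodule.span 𝔽 {w : k | ∃ x y : k, ⁅x, y⁆ = w})
    (ω : (A ⊗[𝔽] k) →ₗ[𝔽] (A ⊗[𝔽] k) →ₗ[𝔽] M)
    (hωskew : ∀ X Y : A ⊗[𝔽] k, ω X Y = - ω Y X)
    (hωcoc : ∀ X Y Z : A ⊗[𝔽] k, ω ⁅X, Y⁆ Z = ω X ⁅Y, Z⁆ - ω Y ⁅X, Z⁆)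
    (hinvariant : ∀ (a b : A) (x y z : k),
      ω (a ⊗ₜ ⁅x, y⁆) (b ⊗ₜ z) = ω (a ⊗ₜ x) (b ⊗ₜ ⁅y, z⁆)) :
    ∀ (a b c : A) (x y : k),
      ω (a ⊗ₜ x) (b ⊗ₜ y) = - ω (b ⊗ₜ x) (a ⊗ₜ y) ∧
      ω ((a * b) ⊗ₜ x) (c ⊗ₜ y)
        = ω (a ⊗ₜ x) ((b * c) ⊗ₜ y) + ω (b ⊗ₜ x) ((a * c) ⊗ₜ y) := by
  have hswap : ∀ (a b : A) (y u v : k),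
      ω (b ⊗ₜ[𝔽] y) (a ⊗ₜ[𝔽] ⁅u, v⁆) = ω (b ⊗ₜ[𝔽] ⁅u, v⁆) (a ⊗ₜ[𝔽] y) := by
    intro a b y u v
    calc ω (b ⊗ₜ[𝔽] y) (a ⊗ₜ[𝔽] ⁅u, v⁆)
        = ω (b ⊗ₜ[𝔽] ⁅y, u⁆) (a ⊗ₜ[𝔽] v) := (hinvariant b a y u v).symm
      _ = - ω (b ⊗ₜ[𝔽] ⁅u, y⁆) (a ⊗ₜ[𝔽] v) := by
          rw [show (⁅y, u⁆ : k) = -⁅u, y⁆ from (lie_skew y u).symm,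
            TensorProduct.tmul_neg, map_neg, LinearMap.neg_apply]
      _ = - ω (b ⊗ₜ[𝔽] u) (a ⊗ₜ[𝔽] ⁅y, v⁆) := by rw [hinvariant b a u y v]
      _ = ω (b ⊗ₜ[𝔽] u) (a ⊗ₜ[𝔽] ⁅v, y⁆) := by
          rw [show (⁅y, v⁆ : k) = -⁅v, y⁆ from (lie_skew y v).symm,
            TensorProduct.tmul_neg, map_neg, neg_neg]
      _ = ω (b ⊗ₜ[𝔽] ⁅u, v⁆) (a ⊗ₜ[𝔽] y) := (hinvariant b a u v y).symm
  intro a b c x y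
  constructor
  · -- skew part
    have key : ∀ z : k,
        (((ω.flip (b ⊗ₜ[𝔽] y)).comp (TensorProduct.mk 𝔽 A k a)) +
          ((ω.flip (a ⊗ₜ[𝔽] y)).comp (TensorProduct.mk 𝔽 A k b))) z = 0 := by
      apply perf_vanish hperf
      intro u v
      simp only [LinearMap.add_apply, LinearMap.comp_apply, TensorProduct.mk_apply,
        LinearMap.flip_apply]
      rw [hωskew (a ⊗ₜ[𝔽] ⁅u, v⁆) (b ⊗ₜ[𝔽] y), hswap a b y u v]
      abel
    have h := key x
    simp only [LinearMap.add_apply, LinearMap.comp_apply, TensorProduct.mk_apply,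
      LinearMap.flip_apply] at h
    exact eq_neg_of_add_eq_zero_left h
  · -- Hochschild part
    have key : ∀ z : k,
        (((ω.flip (c ⊗ₜ[𝔽] y)).comp (TensorProduct.mk 𝔽 A k (a * b))) -
          ((ω.flip ((b * c) ⊗ₜ[𝔽] y)).comp (TensorProduct.mk 𝔽 A k a)) -
          ((ω.flip ((a * c) ⊗ₜ[𝔽] y)).comp (TensorProduct.mk 𝔽 A k b))) z = 0 := by
      apply perf_vanish hperf
      intro u v
      simp only [LinearMap.sub_apply, LinearMap.comp_apply, TensorProduct.mk_apply,
        LinearMap.flip_apply]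
      have hc := hωcoc (a ⊗ₜ[𝔽] u) (b ⊗ₜ[𝔽] v) (c ⊗ₜ[𝔽] y)
      simp only [LieAlgebra.ExtendScalars.bracket_tmul] at hc
      have h1 : ω (a ⊗ₜ[𝔽] u) ((b * c) ⊗ₜ[𝔽] ⁅v, y⁆) = ω (a ⊗ₜ[𝔽] ⁅u, v⁆) ((b * c) ⊗ₜ[𝔽] y) :=
        (hinvariant a (b * c) u v y).symm
      have h2 : ω (b ⊗ₜ[𝔽] v) ((a * c) ⊗ₜ[𝔽] ⁅u, y⁆) = - ω (b ⊗ₜ[𝔽] ⁅u, v⁆) ((a * c) ⊗ₜ[𝔽] y) := by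
        rw [← hinvariant b (a * c) v u y,
          show (⁅v, u⁆ : k) = -⁅u, v⁆ from (lie_skew v u).symm,
          TensorProduct.tmul_neg, map_neg, LinearMap.neg_apply]
      rw [h1, h2] at hc
      rw [hc]
      abel
    have h := key x
    simp only [LinearMap.sub_apply, LinearMap.comp_apply, TensorProduct.mk_apply,
      LinearMap.flip_apply] at h
    have h2 : ω ((a * b) ⊗ₜ[𝔽] x) (c ⊗ₜ[𝔽] y) - ω (a ⊗ₜ[𝔽] x) ((b * c) ⊗ₜ[𝔽] y)
        = ω (b ⊗ₜ[𝔽] x) ((a * c) ⊗ₜ[𝔽] y) := by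
      rw [← sub_eq_zero, ← h]
    exact sub_eq_iff_eq_add'.mp h2
end

section
/- Assume k is finite-dimensional and perfect and κ is derivation invariant. Then every 2-cocycle ω of the current algebra A ⊗ k with values in an 𝔽-vector space M can be written as ω = ω₁ + ω₂, where ω₁ is a k-invariant 2-cocycle and ω₂ is a k-cocyclic 2-cocycle of A ⊗ k. -/
set_option maxHeartbeats 2000000


open scoped TensorProduct

noncomputable def kswapAux {𝔽 : Type*} [Field 𝔽]
    {k : Type*} [AddCommGroup k] [Module 𝔽 k]
    {A : Type*} [CommRing A] [Algebra 𝔽 A]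
    {M : Type*} [AddCommGroup M] [Module 𝔽 M]
    (ω : (A ⊗[𝔽] k) →ₗ[𝔽] (A ⊗[𝔽] k) →ₗ[𝔽] M) :
    (A ⊗[𝔽] k) →ₗ[𝔽] (A ⊗[𝔽] k) →ₗ[𝔽] M :=
  TensorProduct.curry <|
    (TensorProduct.lift ω) ∘ₗ
      ((TensorProduct.tensorTensorTensorComm 𝔽 A k A k).symm.toLinearMap) ∘ₗ
      (LinearMap.lTensor (A ⊗[𝔽] A) (TensorProduct.comm 𝔽 k k).toLinearMap) ∘ₗ
      ((TensorProduct.tensorTensorTensorComm 𝔽 A k A k).toLinearMap)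

@[simp] lemma kswapAux_tmul {𝔽 : Type*} [Field 𝔽]
    {k : Type*} [AddCommGroup k] [Module 𝔽 k]
    {A : Type*} [CommRing A] [Algebra 𝔽 A]
    {M : Type*} [AddCommGroup M] [Module 𝔽 M]
    (ω : (A ⊗[𝔽] k) →ₗ[𝔽] (A ⊗[𝔽] k) →ₗ[𝔽] M) (a b : A) (x y : k) :
    kswapAux ω (a ⊗ₜ x) (b ⊗ₜ y) = ω (a ⊗ₜ y) (b ⊗ₜ x) := by
  simp [kswapAux, TensorProduct.tensorTensorTensorComm_tmul]

/-- Let `k` be a finite-dimensional perfect Lie algebra over a field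
`𝔽` of characteristic zero with a nondegenerate invariant symmetric bilinear form `κ`
which is derivation invariant (every derivation of `k` is κ-skew), and let `A` be a
unital commutative associative `𝔽`-algebra.  Then every 2-cocycle `ω` of the current
algebra `A ⊗ k` with values in an `𝔽`-vector space `M` can be written as `ω = ω₁ + ω₂`,
where `ω₁` is a `k`-invariant 2-cocycle and `ω₂` is a `k`-cocyclic 2-cocycle of
`A ⊗ k`. -/
theorem two_cocycle_splits_invariant_add_cocyclic
    {𝔽 : Type*} [Field 𝔽] [CharZero 𝔽]
    {k : Type*} [LieRing k] [LieAlgebra 𝔽 k] [FiniteDimensional 𝔽 k]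
    {A : Type*} [CommRing A] [Algebra 𝔽 A]
    {M : Type*} [AddCommGroup M] [Module 𝔽 M]
    (hperf : ∀ z : k, z ∈ Submodule.span 𝔽 {w : k | ∃ x y : k, ⁅x, y⁆ = w})
    (κ : k →ₗ[𝔽] k →ₗ[𝔽] 𝔽)
    (hκsymm : ∀ x y : k, κ x y = κ y x)
    (hκinv : ∀ x y z : k, κ ⁅x, y⁆ z = κ x ⁅y, z⁆)
    (hκnd : ∀ x : k, (∀ y : k, κ x y = 0) → x = 0)
    (hderinv : ∀ D : k →ₗ[𝔽] k, (∀ x y : k, D ⁅x, y⁆ = ⁅D x, y⁆ + ⁅x, D y⁆) →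
      ∀ x y : k, κ (D x) y = - κ x (D y))
    (ω : (A ⊗[𝔽] k) →ₗ[𝔽] (A ⊗[𝔽] k) →ₗ[𝔽] M)
    (hωskew : ∀ X Y : A ⊗[𝔽] k, ω X Y = - ω Y X)
    (hωcoc : ∀ X Y Z : A ⊗[𝔽] k, ω ⁅X, Y⁆ Z = ω X ⁅Y, Z⁆ - ω Y ⁅X, Z⁆) :
    ∃ ω₁ ω₂ : (A ⊗[𝔽] k) →ₗ[𝔽] (A ⊗[𝔽] k) →ₗ[𝔽] M,
      ω = ω₁ + ω₂ ∧
      (∀ X Y : A ⊗[𝔽] k, ω₁ X Y = - ω₁ Y X) ∧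
      (∀ X Y Z : A ⊗[𝔽] k, ω₁ ⁅X, Y⁆ Z = ω₁ X ⁅Y, Z⁆ - ω₁ Y ⁅X, Z⁆) ∧
      (∀ (a b : A) (x y z : k),
        ω₁ (a ⊗ₜ ⁅x, y⁆) (b ⊗ₜ z) = ω₁ (a ⊗ₜ x) (b ⊗ₜ ⁅y, z⁆)) ∧
      (∀ X Y : A ⊗[𝔽] k, ω₂ X Y = - ω₂ Y X) ∧
      (∀ X Y Z : A ⊗[𝔽] k, ω₂ ⁅X, Y⁆ Z = ω₂ X ⁅Y, Z⁆ - ω₂ Y ⁅X, Z⁆) ∧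
      (∀ (a b : A),
        (∀ x y : k, ω₂ (a ⊗ₜ x) (b ⊗ₜ y) = - ω₂ (a ⊗ₜ y) (b ⊗ₜ x)) ∧
        (∀ x y z : k, ω₂ (a ⊗ₜ ⁅x, y⁆) (b ⊗ₜ z)
          = ω₂ (a ⊗ₜ x) (b ⊗ₜ ⁅y, z⁆) - ω₂ (a ⊗ₜ y) (b ⊗ₜ ⁅x, z⁆))) := by
  classical
  -- bracket of pure tensors
  have hbr : ∀ (a b : A) (x y : k),
      ⁅a ⊗ₜ[𝔽] x, b ⊗ₜ[𝔽] y⁆ = (a*b) ⊗ₜ[𝔽] ⁅x,y⁆ := fun a b x y => rfl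
  have hbs : ∀ u v : k, ⁅u, v⁆ = -⁅v, u⁆ := fun u v => neg_eq_iff_eq_neg.mp (lie_skew v u)
  -- the cocycle identity on pure tensors
  have hC : ∀ (a b c : A) (x y z : k),
      ω ((a*b) ⊗ₜ ⁅x,y⁆) (c ⊗ₜ z)
        = ω (a ⊗ₜ x) ((b*c) ⊗ₜ ⁅y,z⁆) - ω (b ⊗ₜ y) ((a*c) ⊗ₜ ⁅x,z⁆) := by
    intro a b c x y z
    have h := hωcoc (a ⊗ₜ x) (b ⊗ₜ y) (c ⊗ₜ z)
    rw [hbr, hbr, hbr] at h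
    exact h
  -- Step A : the symmetric part of ω vanishes on (1 ⊗ k) × (c ⊗ k).
  have hA : ∀ (c : A) (x y : k),
      ω (1 ⊗ₜ x) (c ⊗ₜ y) + ω (1 ⊗ₜ y) (c ⊗ₜ x) = 0 := by
    intro c x y
    rw [← Module.forall_dual_apply_eq_zero_iff 𝔽]
    intro f
    set T : k →ₗ[𝔽] k →ₗ[𝔽] 𝔽 :=
      LinearMap.mk₂ 𝔽 (fun u v => f (ω ((1:A) ⊗ₜ u) (c ⊗ₜ v)))
        (by intro u u' v; simp [TensorProduct.tmul_add, map_add])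
        (by intro s u v; simp [TensorProduct.tmul_smul, map_smul])
        (by intro u v v'; simp [TensorProduct.tmul_add, map_add])
        (by intro s u v; simp [TensorProduct.tmul_smul, map_smul]) with hTdef
    have hTapp : ∀ u v : k, T u v = f (ω ((1:A) ⊗ₜ u) (c ⊗ₜ v)) := by
      intro u v; rw [hTdef]; simp
    have hT : ∀ x y z : k, T ⁅x,y⁆ z = T x ⁅y,z⁆ - T y ⁅x,z⁆ := by
      intro x y z
      have h := hC 1 1 c x y z
      simp only [one_mul] at h
      rw [hTapp, hTapp, hTapp, h, map_sub]
    have hnd : LinearMap.BilinForm.Nondegenerate κ :=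
      ⟨hκnd, fun y hy => hκnd y (fun x => by rw [hκsymm]; exact hy x)⟩
    set ψ : k →ₗ[𝔽] k := (LinearMap.BilinForm.toDual κ hnd).symm.toLinearMap ∘ₗ T with hψdef
    have hψ : ∀ u v : k, κ (ψ u) v = T u v := by
      intro u v
      rw [hψdef]
      exact LinearMap.BilinForm.apply_toDual_symm_apply (hB := hnd) (T u) v
    have hψder : ∀ x y : k, ψ ⁅x,y⁆ = ⁅ψ x, y⁆ + ⁅x, ψ y⁆ := by
      intro x y
      have hz : ∀ z, κ (ψ ⁅x,y⁆ - (⁅ψ x, y⁆ + ⁅x, ψ y⁆)) z = 0 := by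
        intro z
        have h1 : κ (ψ ⁅x,y⁆) z = T ⁅x,y⁆ z := hψ _ _
        have h2 : κ ⁅ψ x, y⁆ z = T x ⁅y,z⁆ := by rw [hκinv, hψ]
        have h3 : κ ⁅x, ψ y⁆ z = - T y ⁅x,z⁆ := by
          have h4 : κ ⁅ψ y, x⁆ z = T y ⁅x,z⁆ := by rw [hκinv, hψ]
          rw [hbs x (ψ y)]
          simp only [map_neg, LinearMap.neg_apply]
          rw [h4]
        have h5 := hT x y z
        simp only [map_sub, map_add, LinearMap.sub_apply, LinearMap.add_apply]
        rw [h1, h2, h3, h5]; ring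
      exact sub_eq_zero.mp (hκnd _ hz)
    have hskewT : T x y + T y x = 0 := by
      have h6 := hderinv ψ hψder x y
      rw [hψ] at h6
      have h7 : κ x (ψ y) = T y x := by rw [hκsymm]; exact hψ y x
      rw [h7] at h6
      rw [h6]; ring
    rw [hTapp, hTapp] at hskewT
    simpa [map_add] using hskewT
  -- invariance of the k-symmetrized form (uses only the cocycle identity)
  have hFinv : ∀ (a b : A) (x y z : k),
      ω (a ⊗ₜ ⁅x,y⁆) (b ⊗ₜ z) + ω (a ⊗ₜ z) (b ⊗ₜ ⁅x,y⁆)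
        = ω (a ⊗ₜ x) (b ⊗ₜ ⁅y,z⁆) + ω (a ⊗ₜ ⁅y,z⁆) (b ⊗ₜ x) := by
    intro a b x y z
    have e1 := hC a 1 b x y z
    have e2 := hC a 1 b z y x
    simp only [mul_one, one_mul] at e1 e2
    rw [hbs z y, hbs y x, hbs z x] at e2
    simp only [TensorProduct.tmul_neg, map_neg, LinearMap.neg_apply] at e2
    linear_combination (norm := module) e1 + e2
  -- invariance of h_{b,c}(u,v) = ω(b⊗u, c⊗v) - ω(1⊗u, bc⊗v)
  have hINV : ∀ (b c : A) (x y z : k),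
      ω (b ⊗ₜ ⁅x,y⁆) (c ⊗ₜ z) - ω (1 ⊗ₜ ⁅x,y⁆) ((b*c) ⊗ₜ z)
        = ω (1 ⊗ₜ y) ((b*c) ⊗ₜ ⁅x,z⁆) - ω (b ⊗ₜ y) (c ⊗ₜ ⁅x,z⁆) := by
    intro b c x y z
    have e1 := hC 1 b c x y z
    have e3 := hC 1 1 (b*c) x y z
    simp only [one_mul] at e1 e3
    linear_combination (norm := module) e1 - e3
  -- Leibniz rule for h on brackets
  have hLEIBbr : ∀ (a b c : A) (x y z : k),
      ω ((a*b) ⊗ₜ ⁅x,y⁆) (c ⊗ₜ z) + ω (1 ⊗ₜ ⁅x,y⁆) ((a*(b*c)) ⊗ₜ z)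
        = ω (a ⊗ₜ ⁅x,y⁆) ((b*c) ⊗ₜ z) + ω (b ⊗ₜ ⁅x,y⁆) ((a*c) ⊗ₜ z) := by
    intro a b c x y z
    have e1 := hC a b c x y z
    have e3 := hC a 1 (b*c) x y z
    simp only [one_mul, mul_one] at e3
    have hi := hINV b (a*c) x y z
    rw [mul_left_comm b a c] at hi
    linear_combination (norm := module) e1 - e3 - hi
  -- Leibniz rule for h in general (perfectness)
  have hLEIB : ∀ (a b c : A) (z : k) (u : k),
      ω ((a*b) ⊗ₜ u) (c ⊗ₜ z) + ω (1 ⊗ₜ u) ((a*(b*c)) ⊗ₜ z)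
        = ω (a ⊗ₜ u) ((b*c) ⊗ₜ z) + ω (b ⊗ₜ u) ((a*c) ⊗ₜ z) := by
    intro a b c z u
    have hu := hperf u
    induction hu using Submodule.span_induction with
    | mem w hw => obtain ⟨x, y, rfl⟩ := hw; exact hLEIBbr a b c x y z
    | zero => simp
    | add p q hp hq ihp ihq =>
      simp only [TensorProduct.tmul_add, map_add, LinearMap.add_apply]
      linear_combination (norm := module) ihp + ihq
    | smul r p hp ihp =>
      simp only [TensorProduct.tmul_smul, map_smul, LinearMap.smul_apply]
      linear_combination (norm := module) r • ihp
  -- Leibniz for the k-symmetrization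
  have hStar : ∀ (a b c : A) (u v : k),
      ω ((a*b) ⊗ₜ u) (c ⊗ₜ v) + ω ((a*b) ⊗ₜ v) (c ⊗ₜ u)
        = (ω (a ⊗ₜ u) ((b*c) ⊗ₜ v) + ω (a ⊗ₜ v) ((b*c) ⊗ₜ u))
          + (ω (b ⊗ₜ u) ((a*c) ⊗ₜ v) + ω (b ⊗ₜ v) ((a*c) ⊗ₜ u)) := by
    intro a b c u v
    have l1 := hLEIB a b c v u
    have l2 := hLEIB a b c u v
    have l3 := hA (a*(b*c)) u v
    linear_combination (norm := module) l1 + l2 - l3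
  -- the (doubled) cocycle identity for the k-symmetrization
  have hW1coc : ∀ (a b c : A) (x y z : k),
      (ω ((a*b) ⊗ₜ ⁅x,y⁆) (c ⊗ₜ z) + ω ((a*b) ⊗ₜ z) (c ⊗ₜ ⁅x,y⁆))
        = (ω (a ⊗ₜ x) ((b*c) ⊗ₜ ⁅y,z⁆) + ω (a ⊗ₜ ⁅y,z⁆) ((b*c) ⊗ₜ x))
          - (ω (b ⊗ₜ y) ((a*c) ⊗ₜ ⁅x,z⁆) + ω (b ⊗ₜ ⁅x,z⁆) ((a*c) ⊗ₜ y)) := by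
    intro a b c x y z
    have st := hStar a b c ⁅x,y⁆ z
    have f1 := hFinv a (b*c) x y z
    have f2 := hFinv b (a*c) y x z
    rw [hbs y x] at f2
    simp only [TensorProduct.tmul_neg, map_neg, LinearMap.neg_apply] at f2
    linear_combination (norm := module) st + f1 - f2
  -- define the two pieces
  obtain ⟨ν, hν⟩ : ∃ X : (A ⊗[𝔽] k) →ₗ[𝔽] (A ⊗[𝔽] k) →ₗ[𝔽] M, X = kswapAux ω := ⟨_, rfl⟩
  obtain ⟨Ω₁, hΩ₁⟩ : ∃ X : (A ⊗[𝔽] k) →ₗ[𝔽] (A ⊗[𝔽] k) →ₗ[𝔽] M, X = (2⁻¹:𝔽) • (ω + ν) := ⟨_, rfl⟩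
  obtain ⟨Ω₂, hΩ₂⟩ : ∃ X : (A ⊗[𝔽] k) →ₗ[𝔽] (A ⊗[𝔽] k) →ₗ[𝔽] M, X = (2⁻¹:𝔽) • (ω - ν) := ⟨_, rfl⟩
  have hΩ₁tm : ∀ (a b : A) (x y : k),
      Ω₁ (a ⊗ₜ x) (b ⊗ₜ y)
        = (2⁻¹:𝔽) • (ω (a ⊗ₜ x) (b ⊗ₜ y) + ω (a ⊗ₜ y) (b ⊗ₜ x)) := by
    intro a b x y
    rw [hΩ₁, hν]
    simp [LinearMap.smul_apply, LinearMap.add_apply]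
  have hΩ₂tm : ∀ (a b : A) (x y : k),
      Ω₂ (a ⊗ₜ x) (b ⊗ₜ y)
        = (2⁻¹:𝔽) • (ω (a ⊗ₜ x) (b ⊗ₜ y) - ω (a ⊗ₜ y) (b ⊗ₜ x)) := by
    intro a b x y
    rw [hΩ₂, hν]
    simp [LinearMap.smul_apply, LinearMap.sub_apply]
  have hsplit : ω = Ω₁ + Ω₂ := by
    rw [hΩ₁, hΩ₂]; module
  -- skewness of Ω₁
  have hsk₁ : ∀ X Y, Ω₁ X Y = - Ω₁ Y X := by
    have base : ∀ (a b : A) (x y : k), Ω₁ (a ⊗ₜ x) (b ⊗ₜ y) = - Ω₁ (b ⊗ₜ y) (a ⊗ₜ x) := by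
      intro a b x y
      rw [hΩ₁tm a b x y, hΩ₁tm b a y x]
      linear_combination (norm := module)
        (2⁻¹:𝔽) • hωskew (a ⊗ₜ x) (b ⊗ₜ y) + (2⁻¹:𝔽) • hωskew (a ⊗ₜ y) (b ⊗ₜ x)
    intro X Y
    induction X using TensorProduct.induction_on with
    | zero => simp
    | tmul a x =>
      induction Y using TensorProduct.induction_on with
      | zero => simp
      | tmul b y => exact base a b x y
      | add Y₁ Y₂ h1 h2 =>
        simp only [map_add, LinearMap.add_apply]
        rw [h1, h2]; abel
    | add X₁ X₂ h1 h2 =>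
      simp only [map_add, LinearMap.add_apply]
      rw [h1, h2]; abel
  -- cocycle identity for Ω₁
  have hcoc₁ : ∀ X Y Z, Ω₁ ⁅X, Y⁆ Z = Ω₁ X ⁅Y, Z⁆ - Ω₁ Y ⁅X, Z⁆ := by
    have base : ∀ (a b c : A) (x y z : k),
        Ω₁ ⁅a ⊗ₜ[𝔽] x, b ⊗ₜ[𝔽] y⁆ (c ⊗ₜ z)
          = Ω₁ (a ⊗ₜ x) ⁅b ⊗ₜ[𝔽] y, c ⊗ₜ[𝔽] z⁆ - Ω₁ (b ⊗ₜ y) ⁅a ⊗ₜ[𝔽] x, c ⊗ₜ[𝔽] z⁆ := by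
      intro a b c x y z
      rw [hbr, hbr, hbr, hΩ₁tm, hΩ₁tm, hΩ₁tm]
      linear_combination (norm := module) (2⁻¹:𝔽) • hW1coc a b c x y z
    intro X Y Z
    induction X using TensorProduct.induction_on with
    | zero => simp
    | tmul a x =>
      induction Y using TensorProduct.induction_on with
      | zero => simp
      | tmul b y =>
        induction Z using TensorProduct.induction_on with
        | zero => simp
        | tmul c z => exact base a b c x y z
        | add Z₁ Z₂ h1 h2 =>
          simp only [lie_add, map_add, LinearMap.add_apply]
          linear_combination (norm := module) h1 + h2
      | add Y₁ Y₂ h1 h2 =>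
        simp only [lie_add, add_lie, map_add, LinearMap.add_apply]
        linear_combination (norm := module) h1 + h2
    | add X₁ X₂ h1 h2 =>
      simp only [lie_add, add_lie, map_add, LinearMap.add_apply]
      linear_combination (norm := module) h1 + h2
  -- invariance of Ω₁
  have hinv₁ : ∀ (a b : A) (x y z : k),
      Ω₁ (a ⊗ₜ ⁅x, y⁆) (b ⊗ₜ z) = Ω₁ (a ⊗ₜ x) (b ⊗ₜ ⁅y, z⁆) := by
    intro a b x y z
    rw [hΩ₁tm, hΩ₁tm]
    linear_combination (norm := module) (2⁻¹:𝔽) • hFinv a b x y z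
  -- pointwise description of Ω₂
  have hΩ₂pt : ∀ X Y, Ω₂ X Y = ω X Y - Ω₁ X Y := by
    intro X Y
    conv_rhs => rw [hsplit]
    simp only [LinearMap.add_apply]
    abel
  have hsk₂ : ∀ X Y, Ω₂ X Y = - Ω₂ Y X := by
    intro X Y
    rw [hΩ₂pt X Y, hΩ₂pt Y X]
    linear_combination (norm := module) hωskew X Y - hsk₁ X Y
  have hcoc₂ : ∀ X Y Z, Ω₂ ⁅X, Y⁆ Z = Ω₂ X ⁅Y, Z⁆ - Ω₂ Y ⁅X, Z⁆ := by
    intro X Y Z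
    rw [hΩ₂pt, hΩ₂pt, hΩ₂pt]
    linear_combination (norm := module) hωcoc X Y Z - hcoc₁ X Y Z
  -- tensor-level cocycle identity for Ω₂
  have hΩ₂C : ∀ (a b c : A) (x y z : k),
      Ω₂ ((a*b) ⊗ₜ ⁅x,y⁆) (c ⊗ₜ z)
        = Ω₂ (a ⊗ₜ x) ((b*c) ⊗ₜ ⁅y,z⁆) - Ω₂ (b ⊗ₜ y) ((a*c) ⊗ₜ ⁅x,z⁆) := by
    intro a b c x y z
    have h := hcoc₂ (a ⊗ₜ x) (b ⊗ₜ y) (c ⊗ₜ z)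
    rw [hbr, hbr, hbr] at h
    exact h
  -- A-symmetry of Ω₂
  have hASym : ∀ (a b : A) (x u : k), Ω₂ (a ⊗ₜ x) (b ⊗ₜ u) = Ω₂ (b ⊗ₜ x) (a ⊗ₜ u) := by
    intro a b x u
    rw [hΩ₂tm a b x u, hΩ₂tm b a x u]
    linear_combination (norm := module)
      (2⁻¹:𝔽) • hωskew (b ⊗ₜ u) (a ⊗ₜ x) - (2⁻¹:𝔽) • hωskew (b ⊗ₜ x) (a ⊗ₜ u)
  refine ⟨Ω₁, Ω₂, hsplit, hsk₁, hcoc₁, hinv₁, hsk₂, hcoc₂, ?_⟩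
  intro a b
  constructor
  · intro x y
    rw [hΩ₂tm a b x y, hΩ₂tm a b y x]
    module
  · -- cocyclicity
    have hp : ∀ x y z : k,
        Ω₂ (a ⊗ₜ x) (b ⊗ₜ ⁅y,z⁆) - Ω₂ ((a*b) ⊗ₜ x) ((1:A) ⊗ₜ ⁅y,z⁆)
          = Ω₂ (a ⊗ₜ y) (b ⊗ₜ ⁅x,z⁆) - Ω₂ ((a*b) ⊗ₜ y) ((1:A) ⊗ₜ ⁅x,z⁆) := by
      intro x y z
      have c1 := hΩ₂C a b 1 x y z
      have c2 := hΩ₂C (a*b) 1 1 x y z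
      simp only [mul_one, one_mul] at c1 c2
      have a1 := hASym b a y ⁅x,z⁆
      have a2 := hASym 1 (a*b) y ⁅x,z⁆
      linear_combination (norm := module) c2 - c1 + a1 - a2
    have hskq : ∀ x y z : k,
        Ω₂ (a ⊗ₜ x) (b ⊗ₜ ⁅z,y⁆) - Ω₂ ((a*b) ⊗ₜ x) ((1:A) ⊗ₜ ⁅z,y⁆)
          = -(Ω₂ (a ⊗ₜ x) (b ⊗ₜ ⁅y,z⁆) - Ω₂ ((a*b) ⊗ₜ x) ((1:A) ⊗ₜ ⁅y,z⁆)) := by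
      intro x y z
      rw [hbs z y]
      simp only [TensorProduct.tmul_neg, map_neg]
      module
    have hq0br : ∀ x y z : k,
        Ω₂ (a ⊗ₜ x) (b ⊗ₜ ⁅y,z⁆) = Ω₂ ((a*b) ⊗ₜ x) ((1:A) ⊗ₜ ⁅y,z⁆) := by
      intro x y z
      have e1 := hp x y z
      have e2 := hskq y x z
      have e3 := hp y z x
      have e4 := hskq z x y
      have e5 := hp z x y
      have e6 := hskq x y z
      linear_combination (norm := module)
        (2⁻¹:𝔽) • (e1 + e2 - e3 - e4 + e5 + e6)
    have hq0 : ∀ (x : k) (v : k),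
        Ω₂ (a ⊗ₜ x) (b ⊗ₜ v) = Ω₂ ((a*b) ⊗ₜ x) ((1:A) ⊗ₜ v) := by
      intro x v
      have hv := hperf v
      induction hv using Submodule.span_induction with
      | mem w hw => obtain ⟨y, z, rfl⟩ := hw; exact hq0br x y z
      | zero => simp
      | add p q hpp hqq ihp ihq =>
        simp only [TensorProduct.tmul_add, map_add]
        linear_combination (norm := module) ihp + ihq
      | smul r p hpp ihp =>
        simp only [TensorProduct.tmul_smul, map_smul]
        linear_combination (norm := module) r • ihp
    intro x y z
    have c3 := hΩ₂C a 1 b x y z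
    simp only [mul_one, one_mul] at c3
    have a3 := hASym 1 (a*b) y ⁅x,z⁆
    have q1 := hq0 y ⁅x,z⁆
    linear_combination (norm := module) c3 - a3 + q1
end

section
/- Assume k is finite-dimensional and perfect, and let D₁,…,D_n ∈ der₋(k) be such that κ_{D₁},…,κ_{D_n} form a basis of Z²(k). If ω is a k-cocyclic 2-cocycle of the current algebra A ⊗ k with values in an 𝔽-vector space M, then there exist linear maps f₁,…,f_n : A → M such that ω(a⊗x, b⊗y) = Σᵢ fᵢ(ab)·κ(Dᵢ x, y) for all a, b ∈ A and x, y ∈ k. -/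
open scoped TensorProduct

section Aux

variable {𝔽 : Type*} [Field 𝔽]
    {k : Type*} [LieRing k] [LieAlgebra 𝔽 k] [FiniteDimensional 𝔽 k]
    {M : Type*} [AddCommGroup M] [Module 𝔽 M]

/-- `M`-valued linear independence of the forms `κ ∘ D i`. -/
lemma aux_indep (κ : k →ₗ[𝔽] k →ₗ[𝔽] 𝔽) {n : ℕ} {D : Fin n → (k →ₗ[𝔽] k)}
    (hindep : LinearIndependent 𝔽 (fun i => κ ∘ₗ D i))
    (m : Fin n → M) (h : ∀ x y : k, ∑ i, κ (D i x) y • m i = 0) :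
    ∀ i, m i = 0 := by
  intro i
  rw [← Module.forall_dual_apply_eq_zero_iff 𝔽]
  intro φ
  refine (Fintype.linearIndependent_iff (v := fun i => κ ∘ₗ D i)).mp hindep (fun j => φ (m j)) ?_ i
  ext x y
  have h2 := congrArg φ (h x y)
  simp only [map_sum, map_smul, map_zero, smul_eq_mul] at h2
  simpa [LinearMap.sum_apply, LinearMap.smul_apply, LinearMap.comp_apply,
    smul_eq_mul, mul_comm] using h2

/-- Decomposition of an `M`-valued cocycle in terms of the basis `κ ∘ D i` of `Z²(k)`. -/
lemma aux_decomp (κ : k →ₗ[𝔽] k →ₗ[𝔽] 𝔽) {n : ℕ} {D : Fin n → (k →ₗ[𝔽] k)}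
    (hspan : ∀ β : k →ₗ[𝔽] k →ₗ[𝔽] 𝔽,
      (∀ x y : k, β x y = - β y x) →
      (∀ x y z : k, β ⁅x, y⁆ z = β x ⁅y, z⁆ - β y ⁅x, z⁆) →
      β ∈ Submodule.span 𝔽 (Set.range fun i => κ ∘ₗ D i))
    (Ψ : k →ₗ[𝔽] k →ₗ[𝔽] M)
    (hskew : ∀ x y : k, Ψ x y = - Ψ y x)
    (hcoc : ∀ x y z : k, Ψ ⁅x, y⁆ z = Ψ x ⁅y, z⁆ - Ψ y ⁅x, z⁆) :
    ∃ m : Fin n → M, ∀ x y : k, Ψ x y = ∑ i, κ (D i x) y • m i := by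
  classical
  set L : k ⊗[𝔽] k →ₗ[𝔽] M := TensorProduct.lift Ψ with hL
  set V : Submodule 𝔽 M := LinearMap.range L with hV
  haveI : FiniteDimensional 𝔽 V := by
    haveI : Module.Finite 𝔽 (k ⊗[𝔽] k) := inferInstance
    exact Module.Finite.range L
  set d := Module.finrank 𝔽 V with hd
  set bV : Module.Basis (Fin d) 𝔽 V := Module.finBasis 𝔽 V with hbV
  choose Λ hΛ using fun s : Fin d => LinearMap.exists_extend (bV.coord s)
  have hβmem : ∀ s : Fin d, ∃ c : Fin n → 𝔽,
      (∑ i, c i • (κ ∘ₗ D i)) = Ψ.compr₂ (Λ s) := by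
    intro s
    have h1 : Ψ.compr₂ (Λ s) ∈ Submodule.span 𝔽 (Set.range fun i => κ ∘ₗ D i) := by
      apply hspan
      · intro x y
        simp [LinearMap.compr₂_apply, hskew x y]
      · intro x y z
        simp [LinearMap.compr₂_apply, hcoc x y z, map_sub]
    exact (Submodule.mem_span_range_iff_exists_fun 𝔽).1 h1
  choose c hc using hβmem
  refine ⟨fun i => ∑ s, c s i • (bV s : M), ?_⟩
  intro x y
  have hmem : Ψ x y ∈ V := ⟨x ⊗ₜ y, by simp [hL]⟩
  have hrepr : Ψ x y = ∑ s, Λ s (Ψ x y) • (bV s : M) := by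
    set v : V := ⟨Ψ x y, hmem⟩ with hv
    have h3 : ∀ s, Λ s (Ψ x y) = bV.coord s v := by
      intro s
      have h4 := LinearMap.congr_fun (hΛ s) v
      simpa [hv] using h4
    have h5 : (v : M) = ∑ s, bV.coord s v • (bV s : M) := by
      conv_lhs => rw [← bV.sum_repr v]
      push_cast
      simp [Module.Basis.coord_apply]
    calc Ψ x y = (v : M) := rfl
      _ = ∑ s, bV.coord s v • (bV s : M) := h5
      _ = ∑ s, Λ s (Ψ x y) • (bV s : M) := by
          exact Finset.sum_congr rfl fun s _ => by rw [h3 s]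
  calc Ψ x y = ∑ s, Λ s (Ψ x y) • (bV s : M) := hrepr
    _ = ∑ s, ((∑ i, c s i • (κ ∘ₗ D i)) x y) • (bV s : M) := by
        refine Finset.sum_congr rfl fun s _ => ?_
        rw [hc s]
        rfl
    _ = ∑ s, (∑ i, c s i * κ (D i x) y) • (bV s : M) := by
        refine Finset.sum_congr rfl fun s _ => ?_
        congr 1
        simp [LinearMap.sum_apply, LinearMap.smul_apply, LinearMap.comp_apply,
          smul_eq_mul]
    _ = ∑ i, κ (D i x) y • ∑ s, c s i • (bV s : M) := by
        simp only [Finset.sum_smul, Finset.smul_sum, smul_smul]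
        rw [Finset.sum_comm]
        exact Finset.sum_congr rfl fun i _ =>
          Finset.sum_congr rfl fun s _ => by rw [mul_comm]

end Aux

/-- Let `k` be a finite-dimensional perfect Lie algebra over a field
`𝔽` of characteristic zero with a nondegenerate invariant symmetric bilinear form `κ`,
and let `D₁, …, D_n ∈ der₋(k)` be such that the forms `κ_{Dᵢ} = κ(Dᵢ·,·)` form a basis
of `Z²(k)`.  If `ω` is a `k`-cocyclic 2-cocycle of the current algebra `A ⊗ k` with
values in an `𝔽`-vector space `M`, then there exist linear maps `f₁, …, f_n : A → M`
such that `ω(a⊗x, b⊗y) = Σᵢ fᵢ(ab)·κ(Dᵢ x, y)` for all `a, b ∈ A`, `x, y ∈ k`. -/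
theorem k_cocyclic_eq_sum_eta
    {𝔽 : Type*} [Field 𝔽] [CharZero 𝔽]
    {k : Type*} [LieRing k] [LieAlgebra 𝔽 k] [FiniteDimensional 𝔽 k]
    {A : Type*} [CommRing A] [Algebra 𝔽 A]
    {M : Type*} [AddCommGroup M] [Module 𝔽 M]
    (hperf : ∀ z : k, z ∈ Submodule.span 𝔽 {w : k | ∃ x y : k, ⁅x, y⁆ = w})
    (κ : k →ₗ[𝔽] k →ₗ[𝔽] 𝔽)
    (hκsymm : ∀ x y : k, κ x y = κ y x)
    (hκinv : ∀ x y z : k, κ ⁅x, y⁆ z = κ x ⁅y, z⁆)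
    (hκnd : ∀ x : k, (∀ y : k, κ x y = 0) → x = 0)
    (n : ℕ) (D : Fin n → (k →ₗ[𝔽] k))
    (hDder : ∀ i, ∀ x y : k, D i ⁅x, y⁆ = ⁅D i x, y⁆ + ⁅x, D i y⁆)
    (hDskew : ∀ i, ∀ x y : k, κ (D i x) y = - κ x (D i y))
    (hindep : LinearIndependent 𝔽 (fun i => κ ∘ₗ D i))
    (hspan : ∀ β : k →ₗ[𝔽] k →ₗ[𝔽] 𝔽,
      (∀ x y : k, β x y = - β y x) →
      (∀ x y z : k, β ⁅x, y⁆ z = β x ⁅y, z⁆ - β y ⁅x, z⁆) →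
      β ∈ Submodule.span 𝔽 (Set.range fun i => κ ∘ₗ D i))
    (ω : (A ⊗[𝔽] k) →ₗ[𝔽] (A ⊗[𝔽] k) →ₗ[𝔽] M)
    (hωskew : ∀ X Y : A ⊗[𝔽] k, ω X Y = - ω Y X)
    (hωcoc : ∀ X Y Z : A ⊗[𝔽] k, ω ⁅X, Y⁆ Z = ω X ⁅Y, Z⁆ - ω Y ⁅X, Z⁆)
    (hcocyclic : ∀ (a b : A),
      (∀ x y : k, ω (a ⊗ₜ x) (b ⊗ₜ y) = - ω (a ⊗ₜ y) (b ⊗ₜ x)) ∧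
      (∀ x y z : k, ω (a ⊗ₜ ⁅x, y⁆) (b ⊗ₜ z)
        = ω (a ⊗ₜ x) (b ⊗ₜ ⁅y, z⁆) - ω (a ⊗ₜ y) (b ⊗ₜ ⁅x, z⁆))) :
    ∃ f : Fin n → (A →ₗ[𝔽] M),
      ∀ (a b : A) (x y : k),
        ω (a ⊗ₜ x) (b ⊗ₜ y) = ∑ i, κ (D i x) y • f i (a * b) := by
  classical
  -- The bilinear maps `Ψ a b : (x, y) ↦ ω (a ⊗ x) (b ⊗ y)`.
  let Ψ : A → A → (k →ₗ[𝔽] k →ₗ[𝔽] M) := fun a b =>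
    (ω.comp (TensorProduct.mk 𝔽 A k a)).compl₂ (TensorProduct.mk 𝔽 A k b)
  have hΨ : ∀ a b (x y : k), Ψ a b x y = ω (a ⊗ₜ x) (b ⊗ₜ y) := fun a b x y => rfl
  have hdec : ∀ a b : A, ∃ m : Fin n → M,
      ∀ x y : k, ω (a ⊗ₜ x) (b ⊗ₜ y) = ∑ i, κ (D i x) y • m i := by
    intro a b
    obtain ⟨m, hm⟩ := aux_decomp κ hspan (Ψ a b)
      (fun x y => by rw [hΨ, hΨ]; exact (hcocyclic a b).1 x y)
      (fun x y z => by rw [hΨ, hΨ, hΨ]; exact (hcocyclic a b).2 x y z)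
    exact ⟨m, fun x y => by rw [← hΨ a b x y]; exact hm x y⟩
  choose g hg using hdec
  -- Uniqueness of coefficients.
  have uniq : ∀ u v : Fin n → M,
      (∀ x y : k, ∑ i, κ (D i x) y • u i = ∑ i, κ (D i x) y • v i) → u = v := by
    intro u v h
    funext i
    have h0 := aux_indep κ hindep (fun j => u j - v j) (fun x y => by
      simp [smul_sub, Finset.sum_sub_distrib, h x y]) i
    exact sub_eq_zero.mp h0
  have hcoef : ∀ (i : Fin n) (x y : k), κ (D i x) y = - κ (D i y) x := by
    intro i x y
    rw [hDskew i x y, hκsymm]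
  -- `g` is symmetric.
  have gsymm : ∀ a b : A, g a b = g b a := by
    intro a b
    apply uniq
    intro x y
    rw [← hg a b x y, hωskew, hg b a y x]
    simp only [← Finset.sum_neg_distrib, ← neg_smul]
    exact Finset.sum_congr rfl fun i _ => by rw [hcoef i x y]
  -- the key bilinear-form identity
  have hI : ∀ (i : Fin n) (x y z : k),
      κ (D i ⁅x, y⁆) z = κ (D i x) ⁅y, z⁆ - κ (D i y) ⁅x, z⁆ := by
    intro i x y z
    rw [hDder i x y, map_add, LinearMap.add_apply, hκinv (D i x) y z]
    have h2 : κ ⁅x, D i y⁆ z = - κ (D i y) ⁅x, z⁆ := by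
      have h3 : ⁅x, D i y⁆ = -⁅D i y, x⁆ := (lie_skew x (D i y)).symm
      rw [h3, map_neg, LinearMap.neg_apply, hκinv (D i y) x z]
    rw [h2]
    ring
  -- `g (a*b) 1 = g a b`.
  have key : ∀ a b : A, g (a * b) 1 = g a b := by
    intro a b
    have hbr : ∀ x y z : k,
        ∑ i, κ (D i ⁅x, y⁆) z • (g (a * b) 1 i - g a b i) = 0 := by
      intro x y z
      have h0 := hωcoc (a ⊗ₜ x) (b ⊗ₜ y) ((1 : A) ⊗ₜ z)
      rw [LieAlgebra.ExtendScalars.bracket_tmul, LieAlgebra.ExtendScalars.bracket_tmul,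
        LieAlgebra.ExtendScalars.bracket_tmul, mul_one, mul_one] at h0
      rw [hg (a * b) 1 ⁅x, y⁆ z, hg a b x ⁅y, z⁆, hg b a y ⁅x, z⁆, gsymm b a] at h0
      have h1 : ∑ i, κ (D i ⁅x, y⁆) z • g a b i
          = ∑ i, κ (D i x) ⁅y, z⁆ • g a b i - ∑ i, κ (D i y) ⁅x, z⁆ • g a b i := by
        rw [← Finset.sum_sub_distrib]
        exact Finset.sum_congr rfl fun i _ => by rw [hI i x y z, sub_smul]
      have h2 : ∑ i, κ (D i ⁅x, y⁆) z • g (a * b) 1 i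
          = ∑ i, κ (D i ⁅x, y⁆) z • g a b i := by rw [h0, ← h1]
      simp [smul_sub, Finset.sum_sub_distrib, h2]
    apply uniq
    intro w z
    -- bundle the difference into a linear map and use perfectness
    set F : k →ₗ[𝔽] k →ₗ[𝔽] M :=
      ∑ i, ((κ ∘ₗ D i).compr₂ (LinearMap.toSpanSingleton 𝔽 M (g (a * b) 1 i - g a b i)))
      with hF
    have hFapp : ∀ w z : k, F w z = ∑ i, κ (D i w) z • (g (a * b) 1 i - g a b i) := by
      intro w z
      simp [hF, LinearMap.sum_apply, LinearMap.compr₂_apply, LinearMap.comp_apply,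
        LinearMap.toSpanSingleton_apply]
    have hker : ∀ w : k, F w = 0 := by
      intro w
      have hsub : Submodule.span 𝔽 {w : k | ∃ x y : k, ⁅x, y⁆ = w} ≤ LinearMap.ker F := by
        rw [Submodule.span_le]
        rintro _ ⟨x, y, rfl⟩
        rw [SetLike.mem_coe, LinearMap.mem_ker]
        refine LinearMap.ext fun z => ?_
        rw [LinearMap.zero_apply, hFapp]
        exact hbr x y z
      exact LinearMap.mem_ker.mp (hsub (hperf w))
    have h4 : ∑ i, κ (D i w) z • (g (a * b) 1 i - g a b i) = 0 := by
      rw [← hFapp w z, hker w, LinearMap.zero_apply]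
    rw [← sub_eq_zero, ← Finset.sum_sub_distrib]
    simpa [smul_sub] using h4
  -- linearity of `a ↦ g a 1`
  have hadd : ∀ a a' : A, g (a + a') 1 = fun i => g a 1 i + g a' 1 i := by
    intro a a'
    apply uniq
    intro x y
    rw [← hg (a + a') 1 x y]
    have ht : ((a + a') ⊗ₜ[𝔽] x : A ⊗[𝔽] k) = a ⊗ₜ x + a' ⊗ₜ x :=
      TensorProduct.add_tmul a a' x
    rw [ht, map_add, LinearMap.add_apply, hg a 1 x y, hg a' 1 x y]
    simp [smul_add, Finset.sum_add_distrib]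
  have hsmul : ∀ (r : 𝔽) (a : A), g (r • a) 1 = fun i => r • g a 1 i := by
    intro r a
    apply uniq
    intro x y
    rw [← hg (r • a) 1 x y]
    have ht : ((r • a) ⊗ₜ[𝔽] x : A ⊗[𝔽] k) = r • (a ⊗ₜ x) :=
      TensorProduct.smul_tmul' r a x
    rw [ht, map_smul, LinearMap.smul_apply, hg a 1 x y, Finset.smul_sum]
    exact Finset.sum_congr rfl fun i _ => (smul_comm _ _ _)
  refine ⟨fun i =>
    { toFun := fun a => g a 1 i
      map_add' := fun a a' => congrFun (hadd a a') i
      map_smul' := fun r a => by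
        simp only [RingHom.id_apply]
        exact congrFun (hsmul r a) i }, ?_⟩
  intro a b x y
  rw [hg a b x y, ← key a b]
  rfl
end

section
/- Assume k is finite-dimensional and perfect, and let S₁,…,S_m ∈ cent₊(k) be such that κ_{S₁},…,κ_{S_m} form a basis of the space of invariant symmetric bilinear forms on k. If ω is a k-invariant 2-cocycle of the current algebra A ⊗ k with values in an 𝔽-vector space M, then there exist Hochschild maps F₁,…,F_m : A × A → M such that ω(a⊗x, b⊗y) = Σⱼ Fⱼ(a,b)·κ(Sⱼ x, y) for all a, b ∈ A and x, y ∈ k. -/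
open scoped TensorProduct

/-- Let `k` be a finite-dimensional perfect Lie algebra over a field
`𝔽` of characteristic zero with a nondegenerate invariant symmetric bilinear form `κ`,
and let `S₁, …, S_m ∈ cent₊(k)` be such that the forms `κ_{Sⱼ} = κ(Sⱼ·,·)` form a basis
of the space of invariant symmetric bilinear forms on `k`.  If `ω` is a `k`-invariant
2-cocycle of the current algebra `A ⊗ k` with values in an `𝔽`-vector space `M`, then
there exist Hochschild maps `F₁, …, F_m : A × A → M` such that
`ω(a⊗x, b⊗y) = Σⱼ Fⱼ(a,b)·κ(Sⱼ x, y)` for all `a, b ∈ A`, `x, y ∈ k`. -/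
theorem k_invariant_eq_sum_xi
    {𝔽 : Type*} [Field 𝔽] [CharZero 𝔽]
    {k : Type*} [LieRing k] [LieAlgebra 𝔽 k] [FiniteDimensional 𝔽 k]
    {A : Type*} [CommRing A] [Algebra 𝔽 A]
    {M : Type*} [AddCommGroup M] [Module 𝔽 M]
    (hperf : ∀ z : k, z ∈ Submodule.span 𝔽 {w : k | ∃ x y : k, ⁅x, y⁆ = w})
    (κ : k →ₗ[𝔽] k →ₗ[𝔽] 𝔽)
    (hκsymm : ∀ x y : k, κ x y = κ y x)
    (hκinv : ∀ x y z : k, κ ⁅x, y⁆ z = κ x ⁅y, z⁆)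
    (hκnd : ∀ x : k, (∀ y : k, κ x y = 0) → x = 0)
    (m : ℕ) (S : Fin m → (k →ₗ[𝔽] k))
    (hScent : ∀ j, ∀ x y : k, S j ⁅x, y⁆ = ⁅S j x, y⁆)
    (hSsym : ∀ j, ∀ x y : k, κ (S j x) y = κ x (S j y))
    (hindep : LinearIndependent 𝔽 (fun j => κ ∘ₗ S j))
    (hspan : ∀ β : k →ₗ[𝔽] k →ₗ[𝔽] 𝔽,
      (∀ x y : k, β x y = β y x) →
      (∀ x y z : k, β ⁅x, y⁆ z = β x ⁅y, z⁆) →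
      β ∈ Submodule.span 𝔽 (Set.range fun j => κ ∘ₗ S j))
    (ω : (A ⊗[𝔽] k) →ₗ[𝔽] (A ⊗[𝔽] k) →ₗ[𝔽] M)
    (hωskew : ∀ X Y : A ⊗[𝔽] k, ω X Y = - ω Y X)
    (hωcoc : ∀ X Y Z : A ⊗[𝔽] k, ω ⁅X, Y⁆ Z = ω X ⁅Y, Z⁆ - ω Y ⁅X, Z⁆)
    (hinvariant : ∀ (a b : A) (x y z : k),
      ω (a ⊗ₜ ⁅x, y⁆) (b ⊗ₜ z) = ω (a ⊗ₜ x) (b ⊗ₜ ⁅y, z⁆)) :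
    ∃ F : Fin m → (A →ₗ[𝔽] A →ₗ[𝔽] M),
      (∀ j, ∀ a b : A, F j a b = - F j b a) ∧
      (∀ j, ∀ a b c : A, F j (a * b) c = F j a (b * c) + F j b (a * c)) ∧
      (∀ (a b : A) (x y : k),
        ω (a ⊗ₜ x) (b ⊗ₜ y) = ∑ j, κ (S j x) y • F j a b) := by
  classical
  set v : Fin m → (k →ₗ[𝔽] k →ₗ[𝔽] 𝔽) := fun j => κ ∘ₗ S j with hv
  have hneg1 : ∀ (a b : A) (x y : k), ω (a ⊗ₜ (-x)) (b ⊗ₜ y) = - ω (a ⊗ₜ x) (b ⊗ₜ y) := by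
    intro a b x y; rw [TensorProduct.tmul_neg, map_neg, LinearMap.neg_apply]
  have hneg2 : ∀ (a b : A) (x y : k), ω (a ⊗ₜ x) (b ⊗ₜ (-y)) = - ω (a ⊗ₜ x) (b ⊗ₜ y) := by
    intro a b x y; rw [TensorProduct.tmul_neg, map_neg]
  -- Pointwise symmetry of ω_{a,b} : invariance + perfectness forces symmetry.
  have hsym : ∀ (a b : A) (x y : k), ω (a ⊗ₜ x) (b ⊗ₜ y) = ω (a ⊗ₜ y) (b ⊗ₜ x) := by
    intro a b x y
    induction hperf y using Submodule.span_induction with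
    | mem w hw =>
      obtain ⟨u, w', rfl⟩ := hw
      calc ω (a ⊗ₜ x) (b ⊗ₜ ⁅u, w'⁆)
          = ω (a ⊗ₜ ⁅x, u⁆) (b ⊗ₜ w') := (hinvariant a b x u w').symm
        _ = - ω (a ⊗ₜ ⁅u, x⁆) (b ⊗ₜ w') := by
              rw [← lie_skew x u, hneg1]
        _ = - ω (a ⊗ₜ u) (b ⊗ₜ ⁅x, w'⁆) := by rw [hinvariant]
        _ = ω (a ⊗ₜ u) (b ⊗ₜ ⁅w', x⁆) := by
              rw [← lie_skew x w', hneg2, neg_neg]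
        _ = ω (a ⊗ₜ ⁅u, w'⁆) (b ⊗ₜ x) := by rw [hinvariant]
    | zero => simp [TensorProduct.tmul_zero]
    | add y₁ y₂ h₁ h₂ ih₁ ih₂ => simp [TensorProduct.tmul_add, ih₁, ih₂]
    | smul r y' h ih => simp [TensorProduct.tmul_smul, ih]
  -- Pointwise skew-symmetry in (a,b).
  have hskew' : ∀ (a b : A) (x y : k), ω (a ⊗ₜ x) (b ⊗ₜ y) = - ω (b ⊗ₜ x) (a ⊗ₜ y) := by
    intro a b x y
    rw [hωskew, hsym b a y x]
  -- Pointwise Hochschild identity.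
  have hhoch : ∀ (a b c : A) (x y : k),
      ω ((a * b) ⊗ₜ x) (c ⊗ₜ y)
        = ω (a ⊗ₜ x) ((b * c) ⊗ₜ y) + ω (b ⊗ₜ x) ((a * c) ⊗ₜ y) := by
    intro a b c x y
    induction hperf x using Submodule.span_induction with
    | mem w hw =>
      obtain ⟨u, w', rfl⟩ := hw
      have h0 := hωcoc (a ⊗ₜ u) (b ⊗ₜ w') (c ⊗ₜ y)
      rw [LieAlgebra.ExtendScalars.bracket_tmul, LieAlgebra.ExtendScalars.bracket_tmul,
        LieAlgebra.ExtendScalars.bracket_tmul, ← hinvariant a (b * c) u w' y,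
        ← hinvariant b (a * c) w' u y, ← lie_skew w' u, hneg1, sub_neg_eq_add] at h0
      exact h0
    | zero => simp [TensorProduct.tmul_zero]
    | add x₁ x₂ h₁ h₂ ih₁ ih₂ =>
      simp only [TensorProduct.tmul_add, map_add, LinearMap.add_apply, ih₁, ih₂]
      abel
    | smul r x' h ih =>
      simp only [TensorProduct.tmul_smul, map_smul, LinearMap.smul_apply, ih, smul_add]
  -- Dual functionals picking out the coefficients along the linearly independent family v.
  let T : (Fin m → 𝔽) →ₗ[𝔽] (k →ₗ[𝔽] k →ₗ[𝔽] 𝔽) :=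
    ∑ j : Fin m, (LinearMap.proj j : (Fin m → 𝔽) →ₗ[𝔽] 𝔽).smulRight (v j)
  have hT : ∀ g, T g = ∑ j, g j • v j := by
    intro g
    simp [T, LinearMap.sum_apply, LinearMap.smulRight_apply, LinearMap.proj_apply]
  have hTker : LinearMap.ker T = ⊥ := by
    rw [LinearMap.ker_eq_bot']
    intro g hg
    funext i
    have h1 : ∑ i, g i • (fun j => κ ∘ₗ S j) i = 0 := by rw [← hv, ← hT g]; exact hg
    have h2 := (Fintype.linearIndependent_iff (R := 𝔽) (v := fun j => κ ∘ₗ S j)).mp hindep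
    exact h2 g h1 i
  obtain ⟨L, hL⟩ := LinearMap.exists_leftInverse_of_injective (K := 𝔽) (V := Fin m → 𝔽)
    (V' := k →ₗ[𝔽] k →ₗ[𝔽] 𝔽) T hTker
  let lam : Fin m → ((k →ₗ[𝔽] k →ₗ[𝔽] 𝔽) →ₗ[𝔽] 𝔽) := fun j => (LinearMap.proj j) ∘ₗ L
  have hlamT : ∀ g j, lam j (T g) = g j := by
    intro g j
    have hLg : L (T g) = g := by
      rw [← LinearMap.comp_apply, hL, LinearMap.id_apply]
    simp [lam, hLg]
  have hlamv : ∀ j i, lam j (v i) = if i = j then 1 else 0 := by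
    intro j i
    have hvi : v i = T (Pi.single i 1) := by
      rw [hT]
      simp [Pi.single_apply, ite_smul]
    rw [hvi, hlamT]
    rcases eq_or_ne i j with h | h
    · subst h; simp
    · simp [Pi.single_apply, h, h.symm]
  -- Every functional lam j is a linear combination of evaluations at basis vectors.
  let bk : Module.Basis (Fin (Module.finrank 𝔽 k)) 𝔽 k := Module.finBasis 𝔽 k
  let E : (Fin (Module.finrank 𝔽 k) × Fin (Module.finrank 𝔽 k)) → (k →ₗ[𝔽] k →ₗ[𝔽] 𝔽) :=
    fun p => (bk.coord p.1).smulRight (bk.coord p.2)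
  have hdecomp : ∀ β : k →ₗ[𝔽] k →ₗ[𝔽] 𝔽, β = ∑ p, β (bk p.1) (bk p.2) • E p := by
    intro β
    refine bk.ext fun i => bk.ext fun i' => ?_
    simp [E, LinearMap.sum_apply, LinearMap.smulRight_apply, LinearMap.smul_apply,
      Module.Basis.coord_apply, Module.Basis.repr_self, Finsupp.single_apply, smul_eq_mul,
      Fintype.sum_prod_type, mul_ite, mul_one, mul_zero, ite_mul, zero_mul, one_mul,
      Finset.sum_ite_eq, Finset.sum_ite_eq']
  have hlameval : ∀ j (β : k →ₗ[𝔽] k →ₗ[𝔽] 𝔽),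
      lam j β = ∑ p, β (bk p.1) (bk p.2) * lam j (E p) := by
    intro j β
    conv_lhs => rw [hdecomp β]
    rw [map_sum]
    simp [smul_eq_mul]
  -- Every element of the span of v is the sum of its lam-coordinates times v.
  have hsd : ∀ γ ∈ Submodule.span 𝔽 (Set.range v), γ = ∑ j, lam j γ • v j := by
    intro γ hγ
    induction hγ using Submodule.span_induction with
    | mem γ' hγ' =>
      obtain ⟨i, rfl⟩ := hγ'
      simp [hlamv, ite_smul, Finset.sum_ite_eq]
    | zero => simp
    | add γ₁ γ₂ h₁ h₂ ih₁ ih₂ =>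
      simp only [map_add, add_smul, Finset.sum_add_distrib]
      rw [← ih₁, ← ih₂]
    | smul r γ' h ih =>
      simp only [map_smul, smul_eq_mul, ← smul_smul, ← Finset.smul_sum]
      rw [← ih]
  -- The candidate Hochschild maps.
  let Ψ : k → k → (A →ₗ[𝔽] A →ₗ[𝔽] M) := fun x y =>
    ω.compl₁₂ ((TensorProduct.mk 𝔽 A k).flip x) ((TensorProduct.mk 𝔽 A k).flip y)
  have hΨ : ∀ x y (a b : A), Ψ x y a b = ω (a ⊗ₜ x) (b ⊗ₜ y) := fun _ _ _ _ => rfl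
  let F : Fin m → (A →ₗ[𝔽] A →ₗ[𝔽] M) := fun j => ∑ p, lam j (E p) • Ψ (bk p.1) (bk p.2)
  have hF : ∀ j (a b : A), F j a b = ∑ p, lam j (E p) • ω (a ⊗ₜ bk p.1) (b ⊗ₜ bk p.2) := by
    intro j a b
    simp [F, LinearMap.sum_apply, LinearMap.smul_apply, hΨ]
  refine ⟨F, ?_, ?_, ?_⟩
  · intro j a b
    rw [hF, hF, ← Finset.sum_neg_distrib]
    exact Finset.sum_congr rfl fun p _ => by rw [hskew' a b, smul_neg]
  · intro j a b c
    rw [hF, hF, hF, ← Finset.sum_add_distrib]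
    exact Finset.sum_congr rfl fun p _ => by rw [hhoch, smul_add]
  · intro a b x y
    have key : ∀ φ : Module.Dual 𝔽 M,
        φ (ω (a ⊗ₜ x) (b ⊗ₜ y)) = φ (∑ j, κ (S j x) y • F j a b) := by
      intro φ
      set βφ : k →ₗ[𝔽] k →ₗ[𝔽] 𝔽 :=
        (ω.compl₁₂ (TensorProduct.mk 𝔽 A k a) (TensorProduct.mk 𝔽 A k b)).compr₂ φ with hβφdef
      have hβφ : ∀ x y, βφ x y = φ (ω (a ⊗ₜ x) (b ⊗ₜ y)) := fun _ _ => rfl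
      have hmem : βφ ∈ Submodule.span 𝔽 (Set.range v) :=
        hspan βφ (fun x y => by rw [hβφ, hβφ, hsym])
          (fun x y z => by rw [hβφ, hβφ, hinvariant])
      have hdec := hsd βφ hmem
      have hφF : ∀ j, φ (F j a b) = lam j βφ := by
        intro j
        rw [hF, map_sum, hlameval]
        exact Finset.sum_congr rfl fun p _ => by
          rw [map_smul, smul_eq_mul, mul_comm, hβφ]
      calc φ (ω (a ⊗ₜ x) (b ⊗ₜ y)) = βφ x y := (hβφ x y).symm
        _ = (∑ j, lam j βφ • v j) x y := by rw [← hdec]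
        _ = ∑ j, lam j βφ * (κ (S j x) y) := by
              simp [LinearMap.sum_apply, LinearMap.smul_apply, smul_eq_mul, hv]
        _ = φ (∑ j, κ (S j x) y • F j a b) := by
              rw [map_sum]
              exact Finset.sum_congr rfl fun j _ => by
                rw [map_smul, smul_eq_mul, hφF, mul_comm]
    have hzero : ω (a ⊗ₜ x) (b ⊗ₜ y) - ∑ j, κ (S j x) y • F j a b = 0 := by
      rw [← Module.forall_dual_apply_eq_zero_iff 𝔽]
      intro φ
      rw [map_sub, key φ, sub_self]
    exact sub_eq_zero.mp hzero
end

section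
/- Let k be a finite-dimensional simple real Lie algebra whose Killing form κ is negative definite, A a unital commutative associative real algebra, and M a real vector space. Then every 2-cocycle ω of the current algebra A ⊗ k with values in M is cohomologous to one of the form ω_F(a⊗x, b⊗y) = F(a,b)·κ(x,y) for some Hochschild map F : A × A → M; that is, there exist a Hochschild map F and a linear map ℓ : A ⊗ k → M with ω(a⊗x, b⊗y) = F(a,b)κ(x,y) + ℓ((ab)⊗[x,y]) for all a, b ∈ A and x, y ∈ k. -/
open scoped TensorProduct

section AuxCompactSimple

variable {k : Type*} [LieRing k] [LieAlgebra ℝ k] [FiniteDimensional ℝ k]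

private lemma nontrivial_of_simple [LieAlgebra.IsSimple ℝ k] : Nontrivial k := by
  by_contra h
  rw [not_nontrivial_iff_subsingleton] at h
  exact LieAlgebra.IsSimple.non_abelian (R := ℝ) (L := k) ⟨fun x y => Subsingleton.elim _ _⟩

private lemma killing_symm (x y : k) : killingForm ℝ k x y = killingForm ℝ k y x :=
  LieModule.traceForm_comm ℝ k k x y

private lemma killing_inv1 (x y z : k) :
    killingForm ℝ k ⁅x, y⁆ z = killingForm ℝ k x ⁅y, z⁆ :=
  LieModule.traceForm_apply_lie_apply ℝ k k x y z

private lemma killing_inv2 (x y z : k) :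
    killingForm ℝ k ⁅x, y⁆ z = - killingForm ℝ k y ⁅x, z⁆ :=
  LieModule.traceForm_apply_lie_apply' ℝ k k x y z

/-- Commutant lemma: a κ-symmetric operator commuting with all `ad z` is scalar. -/
private lemma scalar_of_symm_comm [LieAlgebra.IsSimple ℝ k]
    (hκneg : ∀ x : k, x ≠ 0 → killingForm ℝ k x x < 0)
    (S : k →ₗ[ℝ] k)
    (hsym : ∀ x y : k, killingForm ℝ k (S x) y = killingForm ℝ k x (S y))
    (hcomm : ∀ z x : k, S ⁅z, x⁆ = ⁅z, S x⁆) :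
    ∃ c : ℝ, ∀ x : k, S x = c • x := by
  haveI : Nontrivial k := nontrivial_of_simple
  letI core : InnerProductSpace.Core ℝ k :=
    { inner := fun x y => - killingForm ℝ k x y
      conj_inner_symm := by
        intro x y
        simp only [starRingEnd_apply, star_trivial, neg_inj]
        exact killing_symm y x
      re_inner_nonneg := by
        intro x
        rcases eq_or_ne x 0 with h | h
        · simp [h]
        · have := hκneg x h; simp only [RCLike.re_to_real]; linarith
      add_left := by intro x y z; simp only [map_add, LinearMap.add_apply]; ring
      smul_left := by intro x y r; simp [mul_comm]
      definite := by
        intro x hx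
        by_contra h
        have h1 := hκneg x h
        have h2 : - killingForm ℝ k x x = 0 := hx
        linarith }
  letI : NormedAddCommGroup k := core.toNormedAddCommGroup
  letI : InnerProductSpace ℝ k := InnerProductSpace.ofCore core.toCore
  have hS : S.IsSymmetric := by
    intro x y
    show - killingForm ℝ k (S x) y = - killingForm ℝ k x (S y)
    rw [hsym]
  obtain ⟨μ, hμ⟩ : ∃ μ : ℝ, Module.End.HasEigenvalue S μ :=
    ⟨_, hS.hasEigenvalue_iSup_of_finiteDimensional⟩
  -- the eigenspace is a Lie ideal
  let I : LieIdeal ℝ k :=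
    { toSubmodule := Module.End.eigenspace S μ
      lie_mem := by
        intro x m hm
        have hm2 : m ∈ Module.End.eigenspace S μ := hm
        have hm' : S m = μ • m := Module.End.mem_eigenspace_iff.mp hm2
        show ⁅x, m⁆ ∈ Module.End.eigenspace S μ
        rw [Module.End.mem_eigenspace_iff, hcomm, hm', lie_smul]
      }
  have hIbot : I ≠ ⊥ := by
    intro h
    apply hμ
    have : Module.End.eigenspace S μ = ⊥ := by
      have := congrArg (fun J : LieIdeal ℝ k => (J : Submodule ℝ k)) h
      simpa [I] using this
    simpa [Module.End.HasEigenvalue] using this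
  rcases LieAlgebra.IsSimple.eq_bot_or_eq_top I with h | h
  · exact absurd h hIbot
  · refine ⟨μ, fun x => ?_⟩
    have hx : x ∈ I := h ▸ LieSubmodule.mem_top (R := ℝ) (L := k) x
    have : x ∈ Module.End.eigenspace S μ := hx
    rwa [Module.End.mem_eigenspace_iff] at this


/-- A κ-skew operator commuting with all `ad z` is zero. -/
private lemma skew_comm_eq_zero [LieAlgebra.IsSimple ℝ k]
    (hκneg : ∀ x : k, x ≠ 0 → killingForm ℝ k x x < 0)
    (Aop : k →ₗ[ℝ] k)
    (hskew : ∀ x y : k, killingForm ℝ k (Aop x) y = - killingForm ℝ k x (Aop y))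
    (hcomm : ∀ z x : k, Aop ⁅z, x⁆ = ⁅z, Aop x⁆) :
    Aop = 0 := by
  haveI : Nontrivial k := nontrivial_of_simple
  by_contra hA
  obtain ⟨x, hx⟩ : ∃ x : k, Aop x ≠ 0 := by
    by_contra h
    push_neg at h
    exact hA (LinearMap.ext fun v => by simp [h v])
  have hx0 : x ≠ 0 := fun h => hx (by simp [h])
  set A2 : k →ₗ[ℝ] k := Aop ∘ₗ Aop with hA2
  have hsym2 : ∀ x y : k, killingForm ℝ k (A2 x) y = killingForm ℝ k x (A2 y) := by
    intro v w
    have h1 := hskew (Aop v) w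
    have h2 := hskew v (Aop w)
    simp only [LinearMap.comp_apply, hA2]
    rw [h1, h2]; ring
  have hcomm2 : ∀ z v : k, A2 ⁅z, v⁆ = ⁅z, A2 v⁆ := by
    intro z v; simp only [LinearMap.comp_apply, hA2, hcomm]
  obtain ⟨μ, hμ⟩ := scalar_of_symm_comm hκneg A2 hsym2 hcomm2
  have hkey : ∀ v : k, μ * killingForm ℝ k v v = - killingForm ℝ k (Aop v) (Aop v) := by
    intro v
    have h1 : killingForm ℝ k (A2 v) v = μ * killingForm ℝ k v v := by
      rw [hμ v]; simp
    have h2 : killingForm ℝ k (A2 v) v = - killingForm ℝ k (Aop v) (Aop v) := by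
      simp only [LinearMap.comp_apply, hA2]
      rw [hskew (Aop v) v, killing_symm]
    rw [← h1, h2]
  -- μ < 0
  have hμneg : μ < 0 := by
    have h1 := hκneg x hx0
    have h2 := hκneg (Aop x) hx
    have h3 := hkey x
    nlinarith
  set c : ℝ := Real.sqrt (-μ) with hc
  have hcpos : 0 < c := Real.sqrt_pos.mpr (by linarith)
  have hc2 : c * c = -μ := Real.mul_self_sqrt (by linarith)
  set J : k →ₗ[ℝ] k := c⁻¹ • Aop with hJ
  have hJ2 : ∀ v : k, J (J v) = -v := by
    intro v
    have : J (J v) = (c⁻¹ * c⁻¹) • A2 v := by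
      simp only [hJ, LinearMap.smul_apply, LinearMap.comp_apply, hA2, map_smul]
      rw [smul_smul]
    rw [this, hμ v, smul_smul]
    have : c⁻¹ * c⁻¹ * μ = -1 := by
      field_simp
      nlinarith
    rw [this]; simp
  have hJcomm : ∀ z v : k, J ⁅z, v⁆ = ⁅z, J v⁆ := by
    intro z v
    simp only [hJ, LinearMap.smul_apply, hcomm, lie_smul]
  have hadJ : ∀ v y : k, ⁅J v, y⁆ = J ⁅v, y⁆ := by
    intro v y
    rw [← lie_skew v y, map_neg, hJcomm y v, lie_skew]
  -- trace identity
  have htr : killingForm ℝ k (J x) (J x) = - killingForm ℝ k x x := by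
    have had : LieAlgebra.ad ℝ k (J x) = J ∘ₗ LieAlgebra.ad ℝ k x := by
      ext y
      simp only [LieAlgebra.ad_apply, LinearMap.comp_apply]
      exact hadJ x y
    have hmid : J ∘ₗ LieAlgebra.ad ℝ k x = LieAlgebra.ad ℝ k x ∘ₗ J := by
      ext y
      simp only [LieAlgebra.ad_apply, LinearMap.comp_apply]
      exact hJcomm x y
    have hcompose : (LieAlgebra.ad ℝ k (J x)) ∘ₗ (LieAlgebra.ad ℝ k (J x))
        = - ((LieAlgebra.ad ℝ k x) ∘ₗ (LieAlgebra.ad ℝ k x)) := by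
      rw [had]
      calc (J ∘ₗ LieAlgebra.ad ℝ k x) ∘ₗ (J ∘ₗ LieAlgebra.ad ℝ k x)
          = J ∘ₗ ((LieAlgebra.ad ℝ k x ∘ₗ J) ∘ₗ LieAlgebra.ad ℝ k x) := by
            simp only [LinearMap.comp_assoc]
        _ = J ∘ₗ ((J ∘ₗ LieAlgebra.ad ℝ k x) ∘ₗ LieAlgebra.ad ℝ k x) := by rw [hmid]
        _ = (J ∘ₗ J) ∘ₗ (LieAlgebra.ad ℝ k x ∘ₗ LieAlgebra.ad ℝ k x) := by
            simp only [LinearMap.comp_assoc]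
        _ = - ((LieAlgebra.ad ℝ k x) ∘ₗ (LieAlgebra.ad ℝ k x)) := by
            have : J ∘ₗ J = -LinearMap.id := LinearMap.ext fun v => by
              simpa using hJ2 v
            rw [this]
            ext v; simp
    rw [killingForm_apply_apply, killingForm_apply_apply, hcompose, map_neg]
  have hJx : J x ≠ 0 := by
    intro h
    have := hJ2 x
    rw [h] at this
    simp only [map_zero] at this
    exact hx0 (by simpa using this.symm)
  have h1 := hκneg (J x) hJx
  have h2 := hκneg x hx0
  linarith [htr]

/-- Every invariant bilinear form on a compact simple Lie algebra is a multiple of κ. -/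
private lemma invariant_form_eq [LieAlgebra.IsSimple ℝ k]
    (hκneg : ∀ x : k, x ≠ 0 → killingForm ℝ k x x < 0)
    (B : k →ₗ[ℝ] k →ₗ[ℝ] ℝ)
    (hinv : ∀ z x y : k, B ⁅z, x⁆ y = - B x ⁅z, y⁆) :
    ∃ c : ℝ, ∀ x y : k, B x y = c * killingForm ℝ k x y := by
  have hinj : Function.Injective (killingForm ℝ k) := by
    intro x y hxy
    by_contra h
    have hxy0 : x - y ≠ 0 := sub_ne_zero.mpr h
    have h0 : killingForm ℝ k (x - y) = 0 := by rw [map_sub, hxy, sub_self]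
    have := hκneg (x - y) hxy0
    rw [h0] at this
    simp at this
  have hbij : Function.Bijective (killingForm ℝ k) := by
    refine ⟨hinj, ?_⟩
    rw [← LinearMap.injective_iff_surjective_of_finrank_eq_finrank
      (Subspace.dual_finrank_eq (V := k)).symm]
    exact hinj
  let e : k ≃ₗ[ℝ] Module.Dual ℝ k := LinearEquiv.ofBijective _ hbij
  have he : ∀ x : k, e x = killingForm ℝ k x := fun _ => rfl
  have rep : ∀ (C : k →ₗ[ℝ] k →ₗ[ℝ] ℝ), ∃ T : k →ₗ[ℝ] k,
      ∀ x y : k, killingForm ℝ k (T x) y = C x y := by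
    intro C
    refine ⟨e.symm.toLinearMap ∘ₗ C, fun x y => ?_⟩
    have h1 : e (e.symm (C x)) = C x := e.apply_symm_apply (C x)
    have h2 : killingForm ℝ k (e.symm (C x)) = C x := by rw [← he]; exact h1
    simp only [LinearMap.comp_apply, LinearEquiv.coe_coe]
    rw [h2]
  -- invariance of flip
  have hflipinv : ∀ z x y : k, B.flip ⁅z, x⁆ y = - B.flip x ⁅z, y⁆ := by
    intro z x y
    simp only [LinearMap.flip_apply]
    have := hinv z y x
    linarith
  -- symmetric part
  obtain ⟨Ts, hTs⟩ := rep (B + B.flip)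
  have hTsymm : ∀ x y : k, killingForm ℝ k (Ts x) y = killingForm ℝ k x (Ts y) := by
    intro x y
    rw [hTs, killing_symm x (Ts y), hTs]
    simp only [LinearMap.add_apply, LinearMap.flip_apply]
    ring
  have hTscomm : ∀ z x : k, Ts ⁅z, x⁆ = ⁅z, Ts x⁆ := by
    intro z x
    apply hinj
    apply LinearMap.ext
    intro y
    rw [hTs, killing_inv2 z (Ts x) y, hTs]
    simp only [LinearMap.add_apply, LinearMap.flip_apply]
    rw [hinv z x y, hinv z y x]
    ring
  obtain ⟨cs, hcs⟩ := scalar_of_symm_comm hκneg Ts hTsymm hTscomm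
  -- alternating part
  obtain ⟨Ta, hTa⟩ := rep (B - B.flip)
  have hTaskew : ∀ x y : k, killingForm ℝ k (Ta x) y = - killingForm ℝ k x (Ta y) := by
    intro x y
    rw [hTa, killing_symm x (Ta y), hTa]
    simp only [LinearMap.sub_apply, LinearMap.flip_apply]
    ring
  have hTacomm : ∀ z x : k, Ta ⁅z, x⁆ = ⁅z, Ta x⁆ := by
    intro z x
    apply hinj
    apply LinearMap.ext
    intro y
    rw [hTa, killing_inv2 z (Ta x) y, hTa]
    simp only [LinearMap.sub_apply, LinearMap.flip_apply]
    rw [hinv z x y, hinv z y x]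
    ring
  have hTa0 : Ta = 0 := skew_comm_eq_zero hκneg Ta hTaskew hTacomm
  refine ⟨cs / 2, fun x y => ?_⟩
  have h1 : B x y + B y x = cs * killingForm ℝ k x y := by
    have := hTs x y
    rw [hcs x] at this
    simp only [LinearMap.add_apply, LinearMap.flip_apply, map_smul,
      LinearMap.smul_apply, smul_eq_mul] at this
    linarith
  have h2 : B x y - B y x = 0 := by
    have := hTa x y
    rw [hTa0] at this
    simp only [LinearMap.zero_apply, map_zero, LinearMap.sub_apply,
      LinearMap.flip_apply] at this
    linarith [this]
  field_simp
  linarith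

/-- Existence of a basis orthonormal for `-κ`. -/
private lemma exists_negkilling_basis
    (hκneg : ∀ x : k, x ≠ 0 → killingForm ℝ k x x < 0) :
    ∃ b : Module.Basis (Fin (Module.finrank ℝ k)) ℝ k,
      ∀ i j, killingForm ℝ k (b i) (b j) = if i = j then -1 else 0 := by
  letI core : InnerProductSpace.Core ℝ k :=
    { inner := fun x y => - killingForm ℝ k x y
      conj_inner_symm := by
        intro x y
        simp only [starRingEnd_apply, star_trivial, neg_inj]
        exact killing_symm y x
      re_inner_nonneg := by
        intro x
        rcases eq_or_ne x 0 with h | h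
        · simp [h]
        · have := hκneg x h; simp only [RCLike.re_to_real]; linarith
      add_left := by intro x y z; simp only [map_add, LinearMap.add_apply]; ring
      smul_left := by intro x y r; simp [mul_comm]
      definite := by
        intro x hx
        by_contra h
        have h1 := hκneg x h
        have h2 : - killingForm ℝ k x x = 0 := hx
        linarith }
  letI : NormedAddCommGroup k := core.toNormedAddCommGroup
  letI : InnerProductSpace ℝ k := InnerProductSpace.ofCore core.toCore
  refine ⟨(stdOrthonormalBasis ℝ k).toBasis, fun i j => ?_⟩
  have horth := (stdOrthonormalBasis ℝ k).orthonormal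
  rw [orthonormal_iff_ite] at horth
  have h1 : (inner ℝ ((stdOrthonormalBasis ℝ k) i) ((stdOrthonormalBasis ℝ k) j) : ℝ)
      = if i = j then 1 else 0 := horth i j
  have h2 : (inner ℝ ((stdOrthonormalBasis ℝ k) i) ((stdOrthonormalBasis ℝ k) j) : ℝ)
      = - killingForm ℝ k ((stdOrthonormalBasis ℝ k) i) ((stdOrthonormalBasis ℝ k) j) := rfl
  rw [OrthonormalBasis.coe_toBasis]
  rw [h2] at h1
  rcases eq_or_ne i j with h | h <;> simp [h] at h1 ⊢ <;> linarith

variable {ι : Type*} [Fintype ι] [DecidableEq ι]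

/-- Coefficient formula for a `-κ`-orthonormal basis. -/
private lemma basis_coeff (b : Module.Basis ι ℝ k)
    (hb : ∀ i j, killingForm ℝ k (b i) (b j) = if i = j then -1 else 0)
    (v : k) (j : ι) : killingForm ℝ k v (b j) = -(b.repr v j) := by
  conv_lhs => rw [← b.sum_repr v]
  rw [map_sum]
  simp only [map_smul, LinearMap.smul_apply, LinearMap.sum_apply]
  rw [Finset.sum_congr rfl (fun i _ => by rw [hb i j])]
  simp [Finset.sum_ite_eq', smul_eq_mul, mul_ite]

private lemma basis_exp (b : Module.Basis ι ℝ k)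
    (hb : ∀ i j, killingForm ℝ k (b i) (b j) = if i = j then -1 else 0)
    (v : k) : v = ∑ i, (-(killingForm ℝ k v (b i))) • b i := by
  conv_lhs => rw [← b.sum_repr v]
  refine Finset.sum_congr rfl fun i _ => ?_
  rw [basis_coeff b hb v i, neg_neg]

/-- The key swap identity for sums over a `-κ`-orthonormal basis. -/
private lemma swap_sum {V : Type*} [AddCommGroup V] [Module ℝ V]
    (b : Module.Basis ι ℝ k)
    (hb : ∀ i j, killingForm ℝ k (b i) (b j) = if i = j then -1 else 0)
    (G : k →ₗ[ℝ] k →ₗ[ℝ] V) (z : k) :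
    ∑ i, G ⁅b i, z⁆ (b i) = ∑ i, G (b i) ⁅z, b i⁆ := by
  set c : ι → ι → ℝ := fun i j => killingForm ℝ k ⁅z, b i⁆ (b j) with hc
  have hcskew : ∀ i j, c i j = - c j i := by
    intro i j
    rw [hc]
    simp only
    rw [killing_inv2 z (b i) (b j), killing_symm]
  have hz : ∀ i, ⁅z, b i⁆ = ∑ j, (-(c i j)) • b j := fun i => basis_exp b hb _
  have hbz : ∀ i, ⁅b i, z⁆ = ∑ j, c i j • b j := by
    intro i
    rw [← lie_skew, hz i, neg_eq_iff_eq_neg, ← Finset.sum_neg_distrib]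
    exact Finset.sum_congr rfl fun j _ => by rw [neg_smul]
  calc ∑ i, G ⁅b i, z⁆ (b i) = ∑ i, ∑ j, c i j • G (b j) (b i) := by
        refine Finset.sum_congr rfl fun i _ => ?_
        rw [hbz i, map_sum]
        simp [LinearMap.sum_apply]
    _ = ∑ j, ∑ i, c i j • G (b j) (b i) := Finset.sum_comm
    _ = ∑ j, ∑ i, (-(c j i)) • G (b j) (b i) := by
        refine Finset.sum_congr rfl fun j _ => Finset.sum_congr rfl fun i _ => ?_
        rw [hcskew i j]
    _ = ∑ j, G (b j) ⁅z, b j⁆ := by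
        refine Finset.sum_congr rfl fun j _ => ?_
        rw [hz j, map_sum]
        simp

/-- The Casimir operator of a `-κ`-orthonormal basis is `-1`. -/
private lemma casimir_eq [LieAlgebra.IsSimple ℝ k]
    (hκneg : ∀ x : k, x ≠ 0 → killingForm ℝ k x x < 0)
    (b : Module.Basis ι ℝ k)
    (hb : ∀ i j, killingForm ℝ k (b i) (b j) = if i = j then -1 else 0)
    (u : k) : ∑ i, ⁅b i, ⁅b i, u⁆⁆ = -u := by
  haveI : Nontrivial k := nontrivial_of_simple
  set D : k →ₗ[ℝ] k := ∑ i, (LieAlgebra.ad ℝ k (b i)) ∘ₗ (LieAlgebra.ad ℝ k (b i)) with hD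
  have hDapp : ∀ v : k, D v = ∑ i, ⁅b i, ⁅b i, v⁆⁆ := by
    intro v
    rw [hD]
    simp [LinearMap.sum_apply]
  have hDsym : ∀ x y : k, killingForm ℝ k (D x) y = killingForm ℝ k x (D y) := by
    intro x y
    rw [hDapp, hDapp, map_sum, LinearMap.sum_apply, map_sum]
    refine Finset.sum_congr rfl fun i _ => ?_
    rw [killing_inv2 (b i) ⁅b i, x⁆ y, killing_inv2 (b i) x ⁅b i, y⁆, neg_neg]
  have hDcomm : ∀ z x : k, D ⁅z, x⁆ = ⁅z, D x⁆ := by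
    intro z x
    set G : k →ₗ[ℝ] k →ₗ[ℝ] k := LinearMap.mk₂ ℝ (fun v w => ⁅w, ⁅v, x⁆⁆ + ⁅v, ⁅w, x⁆⁆)
      (by intro m n w; simp only [add_lie, lie_add]; abel)
      (by intro r m w; simp only [smul_lie, lie_smul, smul_add])
      (by intro m n w; simp only [add_lie, lie_add]; abel)
      (by intro r m w; simp only [smul_lie, lie_smul, smul_add]) with hG
    have hGsymm : ∀ v w : k, G v w = G w v := by
      intro v w
      simp only [hG, LinearMap.mk₂_apply]
      abel
    have hswap := swap_sum b hb G z
    have h2 : ∑ i, G (b i) ⁅z, b i⁆ = - ∑ i, G ⁅b i, z⁆ (b i) := by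
      rw [← Finset.sum_neg_distrib]
      refine Finset.sum_congr rfl fun i _ => ?_
      rw [← lie_skew z (b i), map_neg, hGsymm]
    have hG0 : ∑ i, G ⁅b i, z⁆ (b i) = 0 := by
      have h3 : ∑ i, G ⁅b i, z⁆ (b i) = - ∑ i, G ⁅b i, z⁆ (b i) := hswap.trans h2
      have h4 : (2 : ℝ) • ∑ i, G ⁅b i, z⁆ (b i) = 0 := by
        rw [two_smul]
        nth_rewrite 2 [h3]
        abel
      exact (smul_eq_zero.mp h4).resolve_left (by norm_num)
    have expand : D ⁅z, x⁆ = (∑ i, G ⁅b i, z⁆ (b i)) + ⁅z, D x⁆ := by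
      rw [hDapp, hDapp]
      have hlie : ⁅z, ∑ i, ⁅b i, ⁅b i, x⁆⁆⁆ = ∑ i, ⁅z, ⁅b i, ⁅b i, x⁆⁆⁆ :=
        map_sum (LieAlgebra.ad ℝ k z) _ _
      rw [hlie, ← Finset.sum_add_distrib]
      refine Finset.sum_congr rfl fun i _ => ?_
      rw [leibniz_lie (b i) z x, lie_add, leibniz_lie (b i) z ⁅b i, x⁆]
      simp only [hG, LinearMap.mk₂_apply]
      abel
    rw [expand, hG0, zero_add]
  obtain ⟨c, hc⟩ := scalar_of_symm_comm hκneg D hDsym hDcomm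
  -- compute the scalar via the trace
  have htr1 : LinearMap.trace ℝ k D = - (Fintype.card ι : ℝ) := by
    rw [hD, map_sum]
    have : ∀ i : ι, LinearMap.trace ℝ k ((LieAlgebra.ad ℝ k (b i)) ∘ₗ (LieAlgebra.ad ℝ k (b i)))
        = killingForm ℝ k (b i) (b i) := fun i => (killingForm_apply_apply ℝ k (b i) (b i)).symm
    rw [Finset.sum_congr rfl fun i _ => this i]
    simp [hb]
  have hDid : D = c • LinearMap.id := by
    apply LinearMap.ext
    intro v
    rw [hc v]
    simp
  have htr2 : LinearMap.trace ℝ k D = c * (Module.finrank ℝ k : ℝ) := by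
    rw [hDid, map_smul, LinearMap.trace_id, smul_eq_mul]
  have hcard : (Fintype.card ι : ℝ) = (Module.finrank ℝ k : ℝ) := by
    rw [Module.finrank_eq_card_basis b]
  have hnpos : 0 < Module.finrank ℝ k := Module.finrank_pos
  have hceq : c = -1 := by
    rw [htr1, hcard] at htr2
    have hn : (0:ℝ) < (Module.finrank ℝ k : ℝ) := by exact_mod_cast hnpos
    have h5 : (c + 1) * (Module.finrank ℝ k : ℝ) = 0 := by ring_nf; linarith [htr2]
    rcases mul_eq_zero.mp h5 with h | h
    · linarith
    · linarith
  rw [← hDapp, hc u, hceq]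
  simp

/-- M-valued invariant maps on `k ⊗ k` are given by the Killing form. -/
private lemma invariant_tensor [LieAlgebra.IsSimple ℝ k]
    (hκneg : ∀ x : k, x ≠ 0 → killingForm ℝ k x x < 0)
    {M : Type*} [AddCommGroup M] [Module ℝ M]
    (g : k ⊗[ℝ] k →ₗ[ℝ] M)
    (hg : ∀ z x y : k, g ((⁅z, x⁆ ⊗ₜ[ℝ] y) + (x ⊗ₜ[ℝ] ⁅z, y⁆)) = 0)
    (θ : k ⊗[ℝ] k) (hθ : TensorProduct.lift (killingForm ℝ k) θ = 1) :
    ∀ x y : k, g (x ⊗ₜ[ℝ] y) = killingForm ℝ k x y • g θ := by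
  set W : Submodule ℝ (k ⊗[ℝ] k) :=
    Submodule.span ℝ {w | ∃ z x y : k, w = (⁅z, x⁆ ⊗ₜ[ℝ] y) + (x ⊗ₜ[ℝ] ⁅z, y⁆)} with hW
  have hgW : ∀ w ∈ W, g w = 0 := by
    intro w hw
    refine Submodule.span_induction ?_ ?_ ?_ ?_ hw
    · rintro w ⟨z, x, y, rfl⟩
      exact hg z x y
    · simp
    · intro u v _ _ hu hv
      rw [map_add, hu, hv, add_zero]
    · intro r u _ hu
      rw [map_smul, hu, smul_zero]
  have hker : ∀ v : k ⊗[ℝ] k, TensorProduct.lift (killingForm ℝ k) v = 0 → v ∈ W := by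
    intro v hv
    by_contra hvW
    have hq : W.mkQ v ≠ 0 := by
      rw [Submodule.mkQ_apply, Ne, Submodule.Quotient.mk_eq_zero]
      exact hvW
    obtain ⟨φ, hφ⟩ : ∃ φ : Module.Dual ℝ ((k ⊗[ℝ] k) ⧸ W), φ (W.mkQ v) ≠ 0 := by
      by_contra h
      push_neg at h
      exact hq ((Module.forall_dual_apply_eq_zero_iff ℝ (W.mkQ v)).mp h)
    set f : k ⊗[ℝ] k →ₗ[ℝ] ℝ := φ ∘ₗ W.mkQ with hf
    have hfW : ∀ w ∈ W, f w = 0 := by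
      intro w hw
      rw [hf]
      simp only [LinearMap.comp_apply, Submodule.mkQ_apply]
      rw [(Submodule.Quotient.mk_eq_zero W).mpr hw, map_zero]
    set B : k →ₗ[ℝ] k →ₗ[ℝ] ℝ := (TensorProduct.mk ℝ k k).compr₂ f with hB
    have hBapp : ∀ x y : k, B x y = f (x ⊗ₜ[ℝ] y) := fun x y => rfl
    have hBinv : ∀ z x y : k, B ⁅z, x⁆ y = - B x ⁅z, y⁆ := by
      intro z x y
      have h0 : f ((⁅z, x⁆ ⊗ₜ[ℝ] y) + (x ⊗ₜ[ℝ] ⁅z, y⁆)) = 0 :=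
        hfW _ (Submodule.subset_span ⟨z, x, y, rfl⟩)
      rw [map_add] at h0
      rw [hBapp, hBapp]
      linarith
    obtain ⟨c, hc⟩ := invariant_form_eq hκneg B hBinv
    have hfeq : f = c • TensorProduct.lift (killingForm ℝ k) := by
      apply TensorProduct.ext'
      intro x y
      rw [← hBapp, hc]
      simp [TensorProduct.lift.tmul]
    have : f v = 0 := by
      rw [hfeq]
      simp [hv]
    exact hφ this
  intro x y
  have hξ : (x ⊗ₜ[ℝ] y) - killingForm ℝ k x y • θ ∈ W := by
    apply hker
    rw [map_sub, map_smul, hθ, TensorProduct.lift.tmul]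
    simp
  have := hgW _ hξ
  rw [map_sub, map_smul, sub_eq_zero] at this
  exact this

end AuxCompactSimple

/-- Let `k` be a finite-dimensional simple real Lie algebra whose
Killing form `κ` is negative definite (i.e. a compact simple Lie algebra), `A` a unital
commutative associative real algebra, and `M` a real vector space.  Then every 2-cocycle
`ω` of the current algebra `A ⊗ k` with values in `M` is cohomologous to one of the form
`ω_F(a⊗x, b⊗y) = F(a,b)·κ(x,y)` for some Hochschild map `F : A × A → M`: there exist a
Hochschild map `F` and a linear map `ℓ : A ⊗ k → M` with
`ω(a⊗x, b⊗y) = F(a,b)κ(x,y) + ℓ((ab)⊗[x,y])` for all `a, b ∈ A`, `x, y ∈ k`. -/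
theorem two_cocycle_compact_simple_current_algebra
    {k : Type*} [LieRing k] [LieAlgebra ℝ k] [FiniteDimensional ℝ k]
    [LieAlgebra.IsSimple ℝ k]
    (hκneg : ∀ x : k, x ≠ 0 → killingForm ℝ k x x < 0)
    {A : Type*} [CommRing A] [Algebra ℝ A]
    {M : Type*} [AddCommGroup M] [Module ℝ M]
    (ω : (A ⊗[ℝ] k) →ₗ[ℝ] (A ⊗[ℝ] k) →ₗ[ℝ] M)
    (hωskew : ∀ X Y : A ⊗[ℝ] k, ω X Y = - ω Y X)
    (hωcoc : ∀ X Y Z : A ⊗[ℝ] k, ω ⁅X, Y⁆ Z = ω X ⁅Y, Z⁆ - ω Y ⁅X, Z⁆) :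
    ∃ (F : A →ₗ[ℝ] A →ₗ[ℝ] M) (ℓ : (A ⊗[ℝ] k) →ₗ[ℝ] M),
      (∀ a b : A, F a b = - F b a) ∧
      (∀ a b c : A, F (a * b) c = F a (b * c) + F b (a * c)) ∧
      (∀ (a b : A) (x y : k),
        ω (a ⊗ₜ x) (b ⊗ₜ y)
          = killingForm ℝ k x y • F a b + ℓ ((a * b) ⊗ₜ ⁅x, y⁆)) := by
  haveI : Nontrivial k := nontrivial_of_simple
  obtain ⟨b, hb⟩ := exists_negkilling_basis hκneg
  have hn : 0 < Module.finrank ℝ k := Module.finrank_pos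
  set e0 : k := b ⟨0, hn⟩ with he0
  have hbr : ∀ (a c : A) (x y : k),
      ⁅(a ⊗ₜ[ℝ] x : A ⊗[ℝ] k), c ⊗ₜ[ℝ] y⁆ = (a * c) ⊗ₜ[ℝ] ⁅x, y⁆ := fun a c x y => rfl
  -- the linear correction term ℓ
  set Lbil : A →ₗ[ℝ] k →ₗ[ℝ] M := LinearMap.mk₂ ℝ
      (fun c u => ∑ i, ω ((1:A) ⊗ₜ[ℝ] ⁅b i, u⁆) (c ⊗ₜ[ℝ] b i))
      (by intro c c' u
          rw [← Finset.sum_add_distrib]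
          refine Finset.sum_congr rfl fun i _ => ?_
          rw [TensorProduct.add_tmul, map_add])
      (by intro r c u
          rw [Finset.smul_sum]
          refine Finset.sum_congr rfl fun i _ => ?_
          rw [← TensorProduct.smul_tmul', map_smul])
      (by intro c u u'
          rw [← Finset.sum_add_distrib]
          refine Finset.sum_congr rfl fun i _ => ?_
          rw [lie_add, TensorProduct.tmul_add, map_add, LinearMap.add_apply])
      (by intro r c u
          rw [Finset.smul_sum]
          refine Finset.sum_congr rfl fun i _ => ?_
          rw [lie_smul, TensorProduct.tmul_smul, map_smul, LinearMap.smul_apply])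
    with hLbil
  set ℓ0 : (A ⊗[ℝ] k) →ₗ[ℝ] M := TensorProduct.lift Lbil with hℓ0
  have hℓ : ∀ (c : A) (u : k),
      ℓ0 (c ⊗ₜ[ℝ] u) = ∑ i, ω ((1:A) ⊗ₜ[ℝ] ⁅b i, u⁆) (c ⊗ₜ[ℝ] b i) := by
    intro c u
    rw [hℓ0, TensorProduct.lift.tmul, hLbil, LinearMap.mk₂_apply]
  -- consequence of the cocycle identity with two scalars equal to 1
  have KI : ∀ (c : A) (z x y : k),
      ω ((1:A) ⊗ₜ[ℝ] ⁅z, x⁆) (c ⊗ₜ[ℝ] y)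
        = ω ((1:A) ⊗ₜ[ℝ] z) (c ⊗ₜ[ℝ] ⁅x, y⁆) - ω ((1:A) ⊗ₜ[ℝ] x) (c ⊗ₜ[ℝ] ⁅z, y⁆) := by
    intro c z x y
    have h := hωcoc ((1:A) ⊗ₜ[ℝ] z) ((1:A) ⊗ₜ[ℝ] x) (c ⊗ₜ[ℝ] y)
    rw [hbr, hbr, hbr] at h
    simp only [one_mul] at h
    exact h
  -- the main property of ℓ
  have P : ∀ (c : A) (z w : k),
      ℓ0 (c ⊗ₜ[ℝ] ⁅z, w⁆) = ω ((1:A) ⊗ₜ[ℝ] z) (c ⊗ₜ[ℝ] w) := by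
    intro c z w
    rw [hℓ]
    have step1 : ∀ i, ω ((1:A) ⊗ₜ[ℝ] ⁅b i, ⁅z, w⁆⁆) (c ⊗ₜ[ℝ] b i)
        = ω ((1:A) ⊗ₜ[ℝ] ⁅⁅b i, z⁆, w⁆) (c ⊗ₜ[ℝ] b i)
          + ω ((1:A) ⊗ₜ[ℝ] ⁅z, ⁅b i, w⁆⁆) (c ⊗ₜ[ℝ] b i) := by
      intro i
      rw [leibniz_lie (b i) z w, TensorProduct.tmul_add, map_add, LinearMap.add_apply]
    rw [Finset.sum_congr rfl fun i _ => step1 i, Finset.sum_add_distrib]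
    have step2 : ∀ i, ω ((1:A) ⊗ₜ[ℝ] ⁅z, ⁅b i, w⁆⁆) (c ⊗ₜ[ℝ] b i)
        = ω ((1:A) ⊗ₜ[ℝ] z) (c ⊗ₜ[ℝ] ⁅⁅b i, w⁆, b i⁆)
          - ω ((1:A) ⊗ₜ[ℝ] ⁅b i, w⁆) (c ⊗ₜ[ℝ] ⁅z, b i⁆) := fun i => KI c z ⁅b i, w⁆ (b i)
    rw [Finset.sum_congr rfl fun i _ => step2 i, Finset.sum_sub_distrib]
    have hsum1 : ∑ i, ω ((1:A) ⊗ₜ[ℝ] z) (c ⊗ₜ[ℝ] ⁅⁅b i, w⁆, b i⁆)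
        = ω ((1:A) ⊗ₜ[ℝ] z) (c ⊗ₜ[ℝ] w) := by
      rw [← map_sum, ← TensorProduct.tmul_sum]
      have hterm : ∀ i : Fin (Module.finrank ℝ k), ⁅⁅b i, w⁆, b i⁆ = -⁅b i, ⁅b i, w⁆⁆ := by
        intro i
        rw [← lie_skew]
      rw [Finset.sum_congr rfl fun i _ => hterm i, Finset.sum_neg_distrib,
        casimir_eq hκneg b hb w, neg_neg]
    have hswap2 : ∑ i, ω ((1:A) ⊗ₜ[ℝ] ⁅⁅b i, z⁆, w⁆) (c ⊗ₜ[ℝ] b i)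
        = ∑ i, ω ((1:A) ⊗ₜ[ℝ] ⁅b i, w⁆) (c ⊗ₜ[ℝ] ⁅z, b i⁆) := by
      set G : k →ₗ[ℝ] k →ₗ[ℝ] M := LinearMap.mk₂ ℝ
          (fun v v' => ω ((1:A) ⊗ₜ[ℝ] ⁅v, w⁆) (c ⊗ₜ[ℝ] v'))
          (by intro m n v'
              simp only [add_lie, TensorProduct.tmul_add, map_add, LinearMap.add_apply])
          (by intro r m v'
              simp only [smul_lie, TensorProduct.tmul_smul, map_smul, LinearMap.smul_apply])
          (by intro m v' v''
              simp only [TensorProduct.tmul_add, map_add])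
          (by intro r m v'
              simp only [TensorProduct.tmul_smul, map_smul]) with hG
      have h := swap_sum b hb G z
      rw [hG] at h
      simpa only [LinearMap.mk₂_apply] using h
    rw [hswap2, hsum1]
    abel
  -- the invariance identity
  have INV : ∀ (a c : A) (z x y : k),
      ω (a ⊗ₜ[ℝ] ⁅z, x⁆) (c ⊗ₜ[ℝ] y) + ω (a ⊗ₜ[ℝ] x) (c ⊗ₜ[ℝ] ⁅z, y⁆)
        = ω ((1:A) ⊗ₜ[ℝ] z) ((a * c) ⊗ₜ[ℝ] ⁅x, y⁆) := by
    intro a c z x y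
    have h := hωcoc ((1:A) ⊗ₜ[ℝ] z) (a ⊗ₜ[ℝ] x) (c ⊗ₜ[ℝ] y)
    rw [hbr, hbr, hbr] at h
    simp only [one_mul] at h
    rw [h]
    abel
  -- the Hochschild map F
  set F : A →ₗ[ℝ] A →ₗ[ℝ] M := LinearMap.mk₂ ℝ
      (fun a c => - ω (a ⊗ₜ[ℝ] e0) (c ⊗ₜ[ℝ] e0))
      (by intro a a' c
          simp only [TensorProduct.add_tmul, map_add, LinearMap.add_apply, neg_add])
      (by intro r a c
          simp only [← TensorProduct.smul_tmul', map_smul, LinearMap.smul_apply, smul_neg])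
      (by intro a c c'
          simp only [TensorProduct.add_tmul, map_add, neg_add])
      (by intro r a c
          simp only [← TensorProduct.smul_tmul', map_smul, smul_neg]) with hF
  have hFapp : ∀ a c : A, F a c = - ω (a ⊗ₜ[ℝ] e0) (c ⊗ₜ[ℝ] e0) := by
    intro a c
    rw [hF, LinearMap.mk₂_apply]
  -- the main formula
  have MAIN : ∀ (a c : A) (x y : k),
      ω (a ⊗ₜ[ℝ] x) (c ⊗ₜ[ℝ] y)
        = killingForm ℝ k x y • F a c + ℓ0 ((a * c) ⊗ₜ[ℝ] ⁅x, y⁆) := by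
    intro a c x y
    set gbil : k →ₗ[ℝ] k →ₗ[ℝ] M := LinearMap.mk₂ ℝ
        (fun x y => ω (a ⊗ₜ[ℝ] x) (c ⊗ₜ[ℝ] y) - ℓ0 ((a * c) ⊗ₜ[ℝ] ⁅x, y⁆))
        (by intro m n y
            simp only [TensorProduct.tmul_add, map_add, LinearMap.add_apply, add_lie]
            abel)
        (by intro r m y
            simp only [TensorProduct.tmul_smul, map_smul, LinearMap.smul_apply, smul_lie,
              smul_sub])
        (by intro m y y'
            simp only [TensorProduct.tmul_add, map_add, lie_add]
            abel)
        (by intro r m y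
            simp only [TensorProduct.tmul_smul, map_smul, lie_smul, smul_sub]) with hgbil
    set g : k ⊗[ℝ] k →ₗ[ℝ] M := TensorProduct.lift gbil with hgdef
    have hgapp : ∀ x y : k, g (x ⊗ₜ[ℝ] y)
        = ω (a ⊗ₜ[ℝ] x) (c ⊗ₜ[ℝ] y) - ℓ0 ((a * c) ⊗ₜ[ℝ] ⁅x, y⁆) := by
      intro x y
      rw [hgdef, TensorProduct.lift.tmul, hgbil, LinearMap.mk₂_apply]
    have hg : ∀ z x y : k, g ((⁅z, x⁆ ⊗ₜ[ℝ] y) + (x ⊗ₜ[ℝ] ⁅z, y⁆)) = 0 := by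
      intro z x y
      rw [map_add, hgapp, hgapp]
      have hP := P (a * c) z ⁅x, y⁆
      have hI := INV a c z x y
      have hJ : ℓ0 ((a * c) ⊗ₜ[ℝ] ⁅⁅z, x⁆, y⁆) + ℓ0 ((a * c) ⊗ₜ[ℝ] ⁅x, ⁅z, y⁆⁆)
          = ℓ0 ((a * c) ⊗ₜ[ℝ] ⁅z, ⁅x, y⁆⁆) := by
        rw [leibniz_lie z x y, TensorProduct.tmul_add, map_add]
      have : ω (a ⊗ₜ[ℝ] ⁅z, x⁆) (c ⊗ₜ[ℝ] y) + ω (a ⊗ₜ[ℝ] x) (c ⊗ₜ[ℝ] ⁅z, y⁆)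
          = ℓ0 ((a * c) ⊗ₜ[ℝ] ⁅⁅z, x⁆, y⁆) + ℓ0 ((a * c) ⊗ₜ[ℝ] ⁅x, ⁅z, y⁆⁆) := by
        rw [hI, hJ, hP]
      rw [sub_add_sub_comm, this, sub_self]
    set θ : k ⊗[ℝ] k := (-1 : ℝ) • (e0 ⊗ₜ[ℝ] e0) with hθdef
    have hθ : TensorProduct.lift (killingForm ℝ k) θ = 1 := by
      rw [hθdef, map_smul, TensorProduct.lift.tmul, he0, hb]
      norm_num
    have key := invariant_tensor hκneg g hg θ hθ x y
    have hgθ : g θ = F a c := by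
      rw [hθdef, map_smul, hgapp, lie_self, TensorProduct.tmul_zero, map_zero, sub_zero,
        hFapp]
      norm_num
    rw [hgapp] at key
    rw [hgθ] at key
    rw [sub_eq_iff_eq_add] at key
    rw [key]
  -- nondegeneracy data
  obtain ⟨x0, y0, hxy⟩ : ∃ x y : k, ⁅x, y⁆ ≠ 0 := by
    by_contra h
    push_neg at h
    exact LieAlgebra.IsSimple.non_abelian (R := ℝ) (L := k) ⟨fun x y => h x y⟩
  obtain ⟨z0, hz0⟩ : ∃ z : k, killingForm ℝ k ⁅x0, y0⁆ z ≠ 0 := by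
    by_contra h
    push_neg at h
    have h1 := hκneg ⁅x0, y0⁆ hxy
    rw [h ⁅x0, y0⁆] at h1
    exact absurd h1 (lt_irrefl 0)
  refine ⟨F, ℓ0, ?_, ?_, fun a c x y => MAIN a c x y⟩
  · -- antisymmetry of F
    intro a c
    rw [hFapp, hFapp, hωskew (a ⊗ₜ[ℝ] e0) (c ⊗ₜ[ℝ] e0), neg_neg]
  · -- Hochschild identity
    intro p q r
    have h := hωcoc (p ⊗ₜ[ℝ] x0) (q ⊗ₜ[ℝ] y0) (r ⊗ₜ[ℝ] z0)
    rw [hbr, hbr, hbr] at h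
    rw [MAIN (p * q) r ⁅x0, y0⁆ z0, MAIN p (q * r) x0 ⁅y0, z0⁆,
      MAIN q (p * r) y0 ⁅x0, z0⁆] at h
    have hk1 : killingForm ℝ k x0 ⁅y0, z0⁆ = killingForm ℝ k ⁅x0, y0⁆ z0 :=
      (killing_inv1 x0 y0 z0).symm
    have hk2 : killingForm ℝ k y0 ⁅x0, z0⁆ = - killingForm ℝ k ⁅x0, y0⁆ z0 := by
      have := killing_inv2 x0 y0 z0
      linarith
    rw [hk1, hk2] at h
    rw [show p * (q * r) = p * q * r by ring, show q * (p * r) = p * q * r by ring] at h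
    have hlie : ℓ0 ((p * q * r) ⊗ₜ[ℝ] ⁅⁅x0, y0⁆, z0⁆)
        = ℓ0 ((p * q * r) ⊗ₜ[ℝ] ⁅x0, ⁅y0, z0⁆⁆)
          - ℓ0 ((p * q * r) ⊗ₜ[ℝ] ⁅y0, ⁅x0, z0⁆⁆) := by
      rw [lie_lie, TensorProduct.tmul_sub, map_sub]
    rw [hlie, neg_smul] at h
    set E : ℝ := killingForm ℝ k ⁅x0, y0⁆ z0 with hE
    have h2 : E • F (p * q) r = E • (F p (q * r) + F q (p * r)) := by
      rw [smul_add]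
      set u1 : M := ℓ0 ((p * q * r) ⊗ₜ[ℝ] ⁅x0, ⁅y0, z0⁆⁆) with hu1
      set u2 : M := ℓ0 ((p * q * r) ⊗ₜ[ℝ] ⁅y0, ⁅x0, z0⁆⁆) with hu2
      calc E • F (p * q) r
          = (E • F (p * q) r + (u1 - u2)) - u1 + u2 := by abel
        _ = ((E • F p (q * r) + u1) - (-(E • F q (p * r)) + u2)) - u1 + u2 := by rw [h]
        _ = E • F p (q * r) + E • F q (p * r) := by abel
    exact smul_right_injective M hz0 h2
end

section
/- Let A be a commutative unital ring, M an A-module (or abelian group), and F : A × A → M a biadditive Hochschild map. If n ≥ 2 and a₁,…,a_n ∈ A satisfy aᵢ² = 0 for every i, then F(a₁⋯a_n, a₁⋯a_n) = 0. (This is the even content of Proposition 3-elm: the element a₁⋯a_n ⊗ x has vanishing self-bracket in any central extension of a current algebra A ⊗ k defined by a cocycle of the form ω_F(a⊗x, b⊗y) = F(a,b)κ(x,y).) -/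
/-- Let `A` be a commutative unital ring, `M` an abelian group, and
`F : A × A → M` a biadditive Hochschild map (so `F(a,b) = −F(b,a)` and
`F(ab,c) = F(a,bc) + F(b,ac)`).  If `n ≥ 2` and `a₁, …, a_n ∈ A` satisfy `aᵢ² = 0` for
every `i`, then `F(a₁⋯a_n, a₁⋯a_n) = 0`. -/
theorem hochschild_vanishes_on_product_of_square_zero
    {A M : Type*} [CommRing A] [AddCommGroup M]
    (F : A → A → M)
    (hFaddl : ∀ a b c : A, F (a + b) c = F a c + F b c)
    (hFaddr : ∀ a b c : A, F a (b + c) = F a b + F a c)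
    (hFskew : ∀ a b : A, F a b = - F b a)
    (hFhoch : ∀ a b c : A, F (a * b) c = F a (b * c) + F b (a * c))
    (n : ℕ) (hn : 2 ≤ n) (a : Fin n → A) (ha : ∀ i, a i ^ 2 = 0) :
    F (∏ i, a i) (∏ i, a i) = 0 := by
  obtain ⟨m, rfl⟩ : ∃ m, n = m + 1 := ⟨n - 1, by omega⟩
  have hm : 0 < m := by omega
  have hF0 : ∀ x : A, F x 0 = 0 := by
    intro x
    have h := hFaddr x 0 0
    rw [add_zero] at h
    exact (left_eq_add.mp h)
  set q := ∏ i : Fin m, a i.succ with hq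
  have hsplit : (∏ i, a i) = a 0 * q := Fin.prod_univ_succ a
  have hq2 : q * q = 0 := by
    have h1 : q * q = ∏ i : Fin m, (a i.succ) ^ 2 := by
      rw [hq, ← Finset.prod_mul_distrib]
      simp [sq]
    rw [h1]
    exact Finset.prod_eq_zero (Finset.mem_univ ⟨0, hm⟩) (ha _)
  have e1 : q * (a 0 * q) = 0 := by
    calc q * (a 0 * q) = a 0 * (q * q) := by ring
    _ = 0 := by rw [hq2, mul_zero]
  have e2 : a 0 * (a 0 * q) = 0 := by
    calc a 0 * (a 0 * q) = (a 0) ^ 2 * q := by ring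
    _ = 0 := by rw [ha 0, zero_mul]
  rw [hsplit, hFhoch, e1, e2, hF0, hF0, add_zero]
end
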